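/- arXiv:1810.09175 — 2 statements merged into one kernel-verified Lean document; each statement's English description precedes it below -/
import Mathlib

section
/- Let p be a prime and let C be a clone on Z_p which contains +, such that C is not contained in Aff(Z_p) and every operation of C preserves the unary relation {0}. Let R be the set of all automorphisms of the group (Z_p, +) that are preserved by every operation in C. If g is a finitary operation on Z_p that preserves every π ∈ R and preserves {0}, then g ∈ C. -/
/-- A finitary operation on `A`: an element of arity `n + 1` (so every arity is `≥ 1`). -/
abbrev Ops (A : Type) := Σ n : ℕ, ((Fin (n + 1) → A) → A)

/-- The product `E·F` of two sets of finitary operations: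
all compositions `f ∘ (g₁, …, gₙ)` with `f ∈ E` and all `gᵢ ∈ F` of a common arity. -/
def OpProd {A : Type} (E F : Set (Ops A)) : Set (Ops A) :=
  { h | ∃ (n m : ℕ) (f : (Fin (n + 1) → A) → A) (g : Fin (n + 1) → (Fin (m + 1) → A) → A),
      (⟨n, f⟩ : Ops A) ∈ E ∧ (∀ i, (⟨m, g i⟩ : Ops A) ∈ F) ∧
      h = ⟨m, fun x => f (fun i => g i x)⟩ }

/-- The set `Lin(Z_p)` of linear operations `(x₁, …, xₙ) ↦ Σ aᵢ xᵢ` on `ZMod p`. -/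
def LinOps (p : ℕ) : Set (Ops (ZMod p)) :=
  { h | ∃ (n : ℕ) (a : Fin (n + 1) → ZMod p), h = ⟨n, fun x => ∑ i, a i * x i⟩ }

/-- A linearly closed clonoid on `ZMod p`. -/
def IsLCC (p : ℕ) (C : Set (Ops (ZMod p))) : Prop :=
  C.Nonempty ∧ OpProd (LinOps p) C ⊆ C ∧ OpProd C (LinOps p) ⊆ C

/-- The sum `D₁ + D₂` of two sets of operations on `ZMod p`. -/
def LCCsum (p : ℕ) (D₁ D₂ : Set (Ops (ZMod p))) : Set (Ops (ZMod p)) :=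
  { h | ∃ (n : ℕ) (f g : (Fin (n + 1) → ZMod p) → ZMod p),
      (⟨n, f⟩ : Ops (ZMod p)) ∈ D₁ ∧ (⟨n, g⟩ : Ops (ZMod p)) ∈ D₂ ∧
      h = ⟨n, fun x => f x + g x⟩ }

/-- The linearly closed clonoid on `ZMod p` generated by a set `F` of operations. -/
def genLC (p : ℕ) (F : Set (Ops (ZMod p))) : Set (Ops (ZMod p)) :=
  ⋂₀ { C | IsLCC p C ∧ F ⊆ C }

/-- A finitely generated linearly closed clonoid on `ZMod p`. -/
def FinGenLCC (p : ℕ) (C : Set (Ops (ZMod p))) : Prop :=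
  ∃ F : Set (Ops (ZMod p)), F.Finite ∧ C = genLC p F

/-- A `p`-minor subset of `ℕ`. -/
def IsPMinor (p : ℕ) (M : Set ℕ) : Prop :=
  ∀ n ∈ M, n > p - 1 → n - (p - 1) ∈ M

/-- A reduced polynomial: every variable exponent is at most `p - 1`. -/
def IsReducedPoly (p : ℕ) (f : MvPolynomial ℕ (ZMod p)) : Prop :=
  ∀ d ∈ f.support, ∀ i, d i ≤ p - 1

/-- The `(n+1)`-ary operation on `ZMod p` induced by a polynomial
(meaningful when all variables of `f` have index `< n + 1`). -/
noncomputable def inducedOp (p n : ℕ) (f : MvPolynomial ℕ (ZMod p)) : (Fin (n + 1) → ZMod p) → ZMod p :=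
  fun x => MvPolynomial.eval (fun i => if h : i < n + 1 then x ⟨i, h⟩ else 0) f

/-- `𝒞(M)`: all constant-zero operations together with all operations induced by a nonzero
reduced polynomial each of whose monomials has total degree in `M`. -/
def CM (p : ℕ) (M : Set ℕ) : Set (Ops (ZMod p)) :=
  { h | ∃ n : ℕ, h = ⟨n, fun _ => 0⟩ } ∪
  { h | ∃ (n : ℕ) (f : MvPolynomial ℕ (ZMod p)), f ≠ 0 ∧ IsReducedPoly p f ∧
      (∀ i ∈ f.vars, i < n + 1) ∧ (∀ d ∈ f.support, (d.sum fun _ e => e) ∈ M) ∧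
      h = ⟨n, inducedOp p n f⟩ }

/-- `𝒫(M)`: polynomials each of whose monomials has total degree in `M` (this includes `0`). -/
def PM (p : ℕ) (M : Set ℕ) : Set (MvPolynomial ℕ (ZMod p)) :=
  { f | ∀ d ∈ f.support, (d.sum fun _ e => e) ∈ M }

/-- The set `L` of linear polynomials `Σ aᵢ xᵢ`. -/
def LinPoly (p : ℕ) : Set (MvPolynomial ℕ (ZMod p)) :=
  { f | ∃ (s : Finset ℕ) (a : ℕ → ZMod p),
      f = ∑ i ∈ s, MvPolynomial.C (a i) * MvPolynomial.X i }

/-- The product `A·B` of two sets of polynomials: substitute members of `B` for the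
variables of a member of `A` (regarded as `n`-ary). -/
def PolyProd (p : ℕ) (A B : Set (MvPolynomial ℕ (ZMod p))) :
    Set (MvPolynomial ℕ (ZMod p)) :=
  { h | ∃ (n : ℕ) (f : MvPolynomial ℕ (ZMod p)) (g : ℕ → MvPolynomial ℕ (ZMod p)),
      f ∈ A ∧ (∀ i ∈ f.vars, i < n) ∧ (∀ i < n, g i ∈ B) ∧ h = MvPolynomial.aeval g f }

/-- A polynomial linearly closed clonoid. -/
def IsPLC (p : ℕ) (C : Set (MvPolynomial ℕ (ZMod p))) : Prop :=
  C.Nonempty ∧ PolyProd p (LinPoly p) C ⊆ C ∧ PolyProd p C (LinPoly p) ⊆ C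

/-- The polynomial linearly closed clonoid generated by `F`. -/
def genPLC (p : ℕ) (F : Set (MvPolynomial ℕ (ZMod p))) : Set (MvPolynomial ℕ (ZMod p)) :=
  ⋂₀ { C | IsPLC p C ∧ F ⊆ C }

/-- A clone on `A`: contains all projections and is closed under composition. -/
def IsClone {A : Type} (C : Set (Ops A)) : Prop :=
  (∀ (n : ℕ) (j : Fin (n + 1)), (⟨n, fun x => x j⟩ : Ops A) ∈ C) ∧ OpProd C C ⊆ C

/-- The clone generated by a set of operations. -/
def cloneGen {A : Type} (F : Set (Ops A)) : Set (Ops A) :=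
  ⋂₀ { C | IsClone C ∧ F ⊆ C }

/-- A finitely generated clone. -/
def FinGenClone {A : Type} (C : Set (Ops A)) : Prop :=
  ∃ F : Set (Ops A), F.Finite ∧ C = cloneGen F

/-- The binary addition operation, as a finitary operation. -/
def plusOp (A : Type) [Add A] : Ops A := ⟨1, fun x => x 0 + x 1⟩

/-- The set of all projections. -/
def ProjOps (A : Type) : Set (Ops A) :=
  { h | ∃ (n : ℕ) (j : Fin (n + 1)), h = ⟨n, fun x => x j⟩ }

/-- A linearly closed iterative algebra on `ZMod p`. -/
def IsLCIA (p : ℕ) (C : Set (Ops (ZMod p))) : Prop :=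
  IsLCC p C ∧ OpProd C (C ∪ ProjOps (ZMod p)) ⊆ C

/-- The clone `Aff(Z_p)` of affine operations `(x₁, …, xₙ) ↦ c + Σ aᵢ xᵢ`. -/
def AffOps (p : ℕ) : Set (Ops (ZMod p)) :=
  { h | ∃ (n : ℕ) (c : ZMod p) (a : Fin (n + 1) → ZMod p),
      h = ⟨n, fun x => c + ∑ i, a i * x i⟩ }

/-- An operation preserves an automorphism `π` of `(ZMod p, +)`. -/
def PreservesAut {p : ℕ} (h : Ops (ZMod p)) (π : AddAut (ZMod p)) : Prop :=
  ∀ x : Fin (h.1 + 1) → ZMod p, h.2 (fun i => π (x i)) = π (h.2 x)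

/-- An operation preserves the unary relation `{0}`. -/
def Preserves0 {p : ℕ} (h : Ops (ZMod p)) : Prop :=
  h.2 (fun _ => 0) = 0

/-- The embedding `φ` of linearly closed clonoids on `ZMod p` into sets of operations
on `ZMod p × ZMod p`. -/
def phiMap (p : ℕ) (C : Set (Ops (ZMod p))) : Set (Ops (ZMod p × ZMod p)) :=
  { h | ∃ (n : ℕ) (l₁ l₂ f : (Fin (n + 1) → ZMod p) → ZMod p),
      (⟨n, l₁⟩ : Ops (ZMod p)) ∈ LinOps p ∧ (⟨n, l₂⟩ : Ops (ZMod p)) ∈ LinOps p ∧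
      (⟨n, f⟩ : Ops (ZMod p)) ∈ C ∧
      h = ⟨n, fun x => (l₁ (fun i => (x i).1) + f (fun i => (x i).2),
                        l₂ (fun i => (x i).2))⟩ }

set_option linter.unusedVariables false

section S17aux
namespace S17

variable {p : ℕ} [Fact p.Prime] {C : Set (Ops (ZMod p))}

/-- monomial function -/
def mon {K : ℕ} (e : Fin K → ℕ) : (Fin K → ZMod p) → ZMod p := fun x => ∏ i, x i ^ e i

lemma memC_comp (hC : IsClone C) {K M : ℕ} {F : (Fin (K+1) → ZMod p) → ZMod p}
    {G : Fin (K+1) → (Fin (M+1) → ZMod p) → ZMod p}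
    (hF : (⟨K, F⟩ : Ops (ZMod p)) ∈ C) (hG : ∀ i, (⟨M, G i⟩ : Ops (ZMod p)) ∈ C) :
    (⟨M, fun x => F (fun i => G i x)⟩ : Ops (ZMod p)) ∈ C :=
  hC.2 ⟨K, M, F, G, hF, hG, rfl⟩

lemma memC_proj (hC : IsClone C) {K : ℕ} (j : Fin (K+1)) :
    (⟨K, fun x => x j⟩ : Ops (ZMod p)) ∈ C := hC.1 K j

lemma memC_add (hC : IsClone C) (hplus : plusOp (ZMod p) ∈ C) {K : ℕ}
    {F G : (Fin (K+1) → ZMod p) → ZMod p}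
    (hF : (⟨K, F⟩ : Ops (ZMod p)) ∈ C) (hG : (⟨K, G⟩ : Ops (ZMod p)) ∈ C) :
    (⟨K, fun x => F x + G x⟩ : Ops (ZMod p)) ∈ C := by
  have h := memC_comp (M := K) hC hplus (G := fun i => if i = 0 then F else G) ?_
  · convert h using 2; simp
  · intro i
    fin_cases i <;> simp [hF, hG]

lemma memC_natmul (hC : IsClone C) (hplus : plusOp (ZMod p) ∈ C) {K : ℕ}
    {F : (Fin (K+1) → ZMod p) → ZMod p} (hF : (⟨K, F⟩ : Ops (ZMod p)) ∈ C) :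
    ∀ (k : ℕ), 1 ≤ k → (⟨K, fun x => (k : ZMod p) * F x⟩ : Ops (ZMod p)) ∈ C := by
  intro k
  induction k with
  | zero => omega
  | succ m ih =>
    intro _
    rcases Nat.eq_zero_or_pos m with h1 | hm
    · subst h1
      have : (fun x : Fin (K+1) → ZMod p => ((0+1 : ℕ) : ZMod p) * F x) = F := by
        funext x; push_cast; ring
      rw [this]; exact hF
    · 
      have h2 := memC_add hC hplus (ih hm) hF
      have : (fun x : Fin (K+1) → ZMod p => ((m+1 : ℕ) : ZMod p) * F x)
          = fun x => (m : ZMod p) * F x + F x := by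
        funext x; push_cast; ring
      rw [this]; exact h2

lemma memC_zero (hC : IsClone C) (hplus : plusOp (ZMod p) ∈ C) {K : ℕ} :
    (⟨K, fun _ => (0 : ZMod p)⟩ : Ops (ZMod p)) ∈ C := by
  have hp : 1 ≤ p := (Fact.out : p.Prime).one_le
  have h := memC_natmul hC hplus (memC_proj hC (0 : Fin (K+1))) p hp
  have : (fun x : Fin (K+1) → ZMod p => (p : ZMod p) * x 0) = fun _ => (0 : ZMod p) := by
    funext x; simp [ZMod.natCast_self]
  rw [this] at h; exact h

lemma memC_smul (hC : IsClone C) (hplus : plusOp (ZMod p) ∈ C) {K : ℕ} (a : ZMod p)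
    {F : (Fin (K+1) → ZMod p) → ZMod p} (hF : (⟨K, F⟩ : Ops (ZMod p)) ∈ C) :
    (⟨K, fun x => a * F x⟩ : Ops (ZMod p)) ∈ C := by
  haveI : NeZero p := ⟨(Fact.out : p.Prime).ne_zero⟩
  have hp1 : 1 ≤ p := (Fact.out : p.Prime).one_le
  have h := memC_natmul hC hplus hF (a.val + p) (by omega)
  have : (fun x : Fin (K+1) → ZMod p => ((a.val + p : ℕ) : ZMod p) * F x)
      = fun x => a * F x := by
    funext x
    have : ((a.val + p : ℕ) : ZMod p) = a := by
      push_cast [ZMod.natCast_self]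
      simpa using ZMod.natCast_rightInverse a
    rw [this]
  rw [this] at h; exact h

lemma memC_sum (hC : IsClone C) (hplus : plusOp (ZMod p) ∈ C) {K : ℕ} {ι : Type*}
    (s : Finset ι) (G : ι → (Fin (K+1) → ZMod p) → ZMod p)
    (hG : ∀ i ∈ s, (⟨K, G i⟩ : Ops (ZMod p)) ∈ C) :
    (⟨K, fun x => ∑ i ∈ s, G i x⟩ : Ops (ZMod p)) ∈ C := by
  classical
  induction s using Finset.cons_induction with
  | empty => simpa using memC_zero hC hplus
  | cons a s ha ih =>
    have h := memC_add hC hplus (hG a (Finset.mem_cons_self a s))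
      (ih (fun i hi => hG i (Finset.mem_cons_of_mem hi)))
    have : (fun x : Fin (K+1) → ZMod p => ∑ i ∈ Finset.cons a s ha, G i x)
        = fun x => G a x + ∑ i ∈ s, G i x := by
      funext x; rw [Finset.sum_cons]
    rw [this]; exact h

lemma memC_sum' (hC : IsClone C) (hplus : plusOp (ZMod p) ∈ C) {K : ℕ} {ι : Type*}
    (s : Finset ι) (c : ι → ZMod p) (G : ι → (Fin (K+1) → ZMod p) → ZMod p)
    (hG : ∀ i ∈ s, c i ≠ 0 → (⟨K, G i⟩ : Ops (ZMod p)) ∈ C) :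
    (⟨K, fun x => ∑ i ∈ s, c i * G i x⟩ : Ops (ZMod p)) ∈ C := by
  classical
  induction s using Finset.cons_induction with
  | empty => simpa using memC_zero hC hplus
  | cons a s ha ih =>
    have ih' := ih (fun i hi hci => hG i (Finset.mem_cons_of_mem hi) hci)
    by_cases hca : c a = 0
    · have : (fun x : Fin (K+1) → ZMod p => ∑ i ∈ Finset.cons a s ha, c i * G i x)
          = fun x => ∑ i ∈ s, c i * G i x := by
        funext x; rw [Finset.sum_cons, hca, zero_mul, zero_add]
      rw [this]; exact ih'
    · have h := memC_add hC hplus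
        (memC_smul hC hplus (c a) (hG a (Finset.mem_cons_self a s) hca)) ih'
      have : (fun x : Fin (K+1) → ZMod p => ∑ i ∈ Finset.cons a s ha, c i * G i x)
          = fun x => c a * G a x + ∑ i ∈ s, c i * G i x := by
        funext x; rw [Finset.sum_cons]
      rw [this]; exact h

lemma memC_scale (hC : IsClone C) (hplus : plusOp (ZMod p) ∈ C) {K : ℕ}
    (b : Fin (K+1) → ZMod p) {F : (Fin (K+1) → ZMod p) → ZMod p}
    (hF : (⟨K, F⟩ : Ops (ZMod p)) ∈ C) :
    (⟨K, fun x => F (fun i => b i * x i)⟩ : Ops (ZMod p)) ∈ C :=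
  memC_comp hC hF (fun i => memC_smul hC hplus (b i) (memC_proj hC i))

end S17

namespace S17
variable {p : ℕ} [Fact p.Prime] {C : Set (Ops (ZMod p))}

lemma mon_scale {K : ℕ} (e : Fin K → ℕ) (b x : Fin K → ZMod p) :
    mon e (fun i => b i * x i) = (∏ i, b i ^ e i) * mon e x := by
  simp [mon, mul_pow, Finset.prod_mul_distrib]

lemma mon_scale_const {K : ℕ} (e : Fin K → ℕ) (t : ZMod p) (x : Fin K → ZMod p) :
    mon e (fun i => t * x i) = t ^ (∑ i, e i) * mon e x := by
  rw [mon_scale]; congr 1; rw [Finset.prod_pow_eq_pow_sum]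

lemma mon_zero_arg {K : ℕ} (e : Fin K → ℕ) :
    mon (p := p) e (fun _ => (0:ZMod p)) = if ∀ i, e i = 0 then 1 else 0 := by
  by_cases h : ∀ i, e i = 0
  · rw [if_pos h]; simp [mon, h]
  · rw [if_neg h]; push_neg at h; obtain ⟨i, hi⟩ := h
    exact Finset.prod_eq_zero (Finset.mem_univ i) (zero_pow hi)

lemma sum_units_pow (a : ℕ) :
    ∑ u : (ZMod p)ˣ, ((u : ZMod p))^a = if (p-1) ∣ a then (-1 : ZMod p) else 0 := by
  classical
  obtain ⟨ζ, hζgen⟩ := IsCyclic.exists_generator (α := (ZMod p)ˣ)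
  have hord : orderOf ζ = p - 1 := by
    rw [orderOf_eq_card_of_forall_mem_zpowers hζgen, Nat.card_eq_fintype_card, ZMod.card_units]
  by_cases h : (p-1) ∣ a
  · rw [if_pos h]
    have h1 : ∀ u : (ZMod p)ˣ, ((u : ZMod p))^a = 1 := by
      intro u
      obtain ⟨k, hk⟩ := h
      have hu : u ^ (p-1) = 1 := by rw [← ZMod.card_units p]; exact pow_card_eq_one
      calc ((u : ZMod p))^a = ((u ^ a : (ZMod p)ˣ) : ZMod p) := by
            rw [Units.val_pow_eq_pow_val]
        _ = 1 := by rw [hk, pow_mul, hu, one_pow, Units.val_one]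
    rw [Finset.sum_congr rfl (fun u _ => h1 u), Finset.sum_const, Finset.card_univ,
      ZMod.card_units]
    have : ((p - 1 : ℕ) : ZMod p) = -1 := by
      rw [Nat.cast_sub (Fact.out : p.Prime).one_le]; simp [ZMod.natCast_self]
    simp [this]
  · rw [if_neg h]
    set S := ∑ u : (ZMod p)ˣ, ((u : ZMod p))^a with hS
    have key : ((ζ : ZMod p))^a * S = S := by
      rw [hS, Finset.mul_sum]
      exact Fintype.sum_equiv (Equiv.mulLeft ζ) _ _ (fun u => by
        simp [Units.val_mul, mul_pow])
    have hζa : ((ζ : ZMod p))^a ≠ 1 := by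
      intro hcon
      have : (ζ^a : (ZMod p)ˣ) = 1 := by
        apply Units.ext; rw [Units.val_pow_eq_pow_val, hcon, Units.val_one]
      exact h (hord ▸ orderOf_dvd_of_pow_eq_one this)
    have h2 : (((ζ : ZMod p))^a - 1) * S = 0 := by
      rw [sub_mul, one_mul, key, sub_self]
    rcases mul_eq_zero.mp h2 with h3 | h3
    · exact absurd (sub_eq_zero.mp h3) hζa
    · exact h3

lemma geom_field (u : ZMod p) (dd : ℕ) (hu : u ^ dd = 1) :
    ∑ j ∈ Finset.range dd, u ^ j = if u = 1 then (dd : ZMod p) else 0 := by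
  by_cases h : u = 1
  · simp [h]
  · rw [if_neg h]
    have h2 := geom_sum_mul u dd
    rw [hu, sub_self] at h2
    rcases mul_eq_zero.mp h2 with h3 | h3
    · exact h3
    · exact absurd (sub_eq_zero.mp h3) h

/-- the `w`-component of `F` -/
def cw {K : ℕ} (w : Fin (K+1) → ℕ) (F : (Fin (K+1) → ZMod p) → ZMod p) :
    (Fin (K+1) → ZMod p) → ZMod p :=
  fun x => (-1)^(K+1) * ∑ l : Fin (K+1) → (ZMod p)ˣ,
    (∏ i, ((l i : ZMod p)) ^ (p - 1 - w i)) * F (fun i => (l i : ZMod p) * x i)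

lemma cw_mem (hC : IsClone C) (hplus : plusOp (ZMod p) ∈ C) {K : ℕ}
    (w : Fin (K+1) → ℕ) {F : (Fin (K+1) → ZMod p) → ZMod p}
    (hF : (⟨K, F⟩ : Ops (ZMod p)) ∈ C) :
    (⟨K, cw w F⟩ : Ops (ZMod p)) ∈ C := by
  classical
  unfold cw
  exact memC_smul hC hplus _ (memC_sum hC hplus Finset.univ _ (fun l _ =>
    memC_smul hC hplus _ (memC_scale hC hplus _ hF)))

lemma dvd_window {n w E : ℕ} (h1 : 1 ≤ w) (h2 : w ≤ n) (h3 : E ≤ n)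
    (hd : n ∣ (n - w + E)) : E = w ∨ (E = 0 ∧ w = n) := by
  obtain ⟨k, hk⟩ := hd
  have hlt : n - w + E < n * 2 := by omega
  rw [hk] at hlt
  have hk2 : k < 2 := Nat.lt_of_mul_lt_mul_left hlt
  interval_cases k
  · right; constructor <;> omega
  · left; omega

lemma cw_mon {K : ℕ} (w E : Fin (K+1) → ℕ) (hE : ∀ i, E i ≤ p - 1)
    (hw1 : ∀ i, 1 ≤ w i) (hw2 : ∀ i, w i ≤ p - 1) :
    cw w (mon E) = if (∀ i, E i = w i ∨ (E i = 0 ∧ w i = p - 1))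
      then mon (p := p) E else (fun _ => 0) := by
  classical
  funext x
  have step1 : cw w (mon E) x
      = (-1)^(K+1) * ((∑ l : Fin (K+1) → (ZMod p)ˣ,
          ∏ i, ((l i : ZMod p)) ^ (p - 1 - w i + E i)) * mon E x) := by
    unfold cw
    rw [Finset.sum_mul]
    congr 1
    apply Finset.sum_congr rfl
    intro l _
    simp only [mon, mul_pow, Finset.prod_mul_distrib, pow_add]
    ring
  have step2 : (∑ l : Fin (K+1) → (ZMod p)ˣ, ∏ i, ((l i : ZMod p)) ^ (p - 1 - w i + E i))
      = ∏ i, (if (p-1) ∣ (p - 1 - w i + E i) then (-1 : ZMod p) else 0) := by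
    have hps := Finset.prod_univ_sum (t := fun _ : Fin (K+1) => (Finset.univ : Finset (ZMod p)ˣ))
      (f := fun i u => ((u : ZMod p))^(p - 1 - w i + E i))
    rw [Fintype.piFinset_univ] at hps
    rw [← hps]
    exact Finset.prod_congr rfl (fun i _ => sum_units_pow _)
  rw [step1, step2]
  by_cases hall : ∀ i, E i = w i ∨ (E i = 0 ∧ w i = p - 1)
  · rw [if_pos hall]
    have hdvd : ∀ i, (p-1) ∣ (p - 1 - w i + E i) := by
      intro i
      rcases hall i with h | ⟨h1, h2⟩
      · have : p - 1 - w i + E i = p - 1 := by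
          have := hw2 i; omega
        rw [this]
      · have : p - 1 - w i + E i = 0 := by omega
        rw [this]; exact dvd_zero _
    rw [Finset.prod_congr rfl (fun i _ => if_pos (hdvd i)), Finset.prod_const,
      Finset.card_univ, Fintype.card_fin]
    rw [← mul_assoc, ← mul_pow]
    norm_num
  · rw [if_neg hall]
    push_neg at hall
    obtain ⟨i, hi⟩ := hall
    have hnd : ¬ (p-1) ∣ (p - 1 - w i + E i) := by
      intro hd
      rcases dvd_window (hw1 i) (hw2 i) (hE i) hd with h | ⟨ha, hb⟩
      · exact hi.1 h
      · exact hi.2 ha hb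
    have hz : (∏ i : Fin (K+1), if (p-1) ∣ (p - 1 - w i + E i) then (-1 : ZMod p) else 0) = 0 :=
      Finset.prod_eq_zero (Finset.mem_univ i) (by rw [if_neg hnd])
    rw [hz]
    ring

lemma cw_sum {K : ℕ} (w : Fin (K+1) → ℕ) {ι : Type*} (s : Finset ι) (c : ι → ZMod p)
    (G : ι → (Fin (K+1) → ZMod p) → ZMod p) :
    cw w (fun x => ∑ e ∈ s, c e * G e x) = fun x => ∑ e ∈ s, c e * cw w (G e) x := by
  classical
  funext x
  unfold cw
  simp only [Finset.mul_sum]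
  rw [Finset.sum_comm]
  apply Finset.sum_congr rfl
  intro e _
  apply Finset.sum_congr rfl
  intro l _
  ring

end S17

namespace S17
variable {p : ℕ} [Fact p.Prime]

def Dco (a : ZMod p) (j : ℕ) : ZMod p :=
  (if j = 0 then 1 else 0) - ((p-1).choose j : ZMod p) * (-a)^(p-1-j)

lemma hdelta (a y : ZMod p) :
    (if y = a then (1:ZMod p) else 0) = ∑ j : Fin p, Dco a (j:ℕ) * y^(j:ℕ) := by
  classical
  have hp2 : 2 ≤ p := (Fact.out : p.Prime).two_le
  have hrw : ∑ j : Fin p, Dco a (j:ℕ) * y^(j:ℕ)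
      = ∑ j ∈ Finset.range p, Dco a j * y^j :=
    Fin.sum_univ_eq_sum_range (fun j => Dco a j * y^j) p
  rw [hrw]
  have hsplit : ∑ j ∈ Finset.range p, Dco a j * y^j
      = (∑ j ∈ Finset.range p, (if j = 0 then (1:ZMod p) else 0) * y^j)
        - ∑ j ∈ Finset.range p, y^j * (-a)^(p-1-j) * ((p-1).choose j : ZMod p) := by
    rw [← Finset.sum_sub_distrib]
    apply Finset.sum_congr rfl
    intro j _
    unfold Dco
    ring
  rw [hsplit]
  have h1 : (∑ j ∈ Finset.range p, (if j = 0 then (1:ZMod p) else 0) * y^j) = 1 := by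
    rw [Finset.sum_eq_single_of_mem 0 (Finset.mem_range.mpr (by omega))]
    · simp
    · intro j _ hj; rw [if_neg hj, zero_mul]
  have h2 : ∑ j ∈ Finset.range p, y^j * (-a)^(p-1-j) * ((p-1).choose j : ZMod p)
      = (y - a)^(p-1) := by
    have hpp : p - 1 + 1 = p := by omega
    have haux := add_pow y (-a) (p-1)
    rw [← sub_eq_add_neg, hpp] at haux
    rw [haux]
  rw [h1, h2]
  by_cases h : y = a
  · rw [if_pos h, h, sub_self, zero_pow (by omega : p - 1 ≠ 0), sub_zero]
  · rw [if_neg h, ZMod.pow_card_sub_one_eq_one (sub_ne_zero_of_ne h), sub_self]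

lemma mon_succ {K : ℕ} (E : Fin (K+1) → ℕ) (x : Fin (K+1) → ZMod p) :
    mon E x = x 0 ^ E 0 * mon (fun i => E i.succ) (Fin.tail x) := by
  unfold mon
  rw [Fin.prod_univ_succ]
  rfl

lemma span : ∀ (K : ℕ) (f : (Fin K → ZMod p) → ZMod p),
    ∃ c : (Fin K → Fin p) → ZMod p,
      ∀ x, f x = ∑ e : (Fin K → Fin p), c e * mon (fun i => ((e i : ℕ))) x := by
  classical
  intro K
  induction K with
  | zero =>
    intro f
    refine ⟨fun _ => f (fun i => i.elim0), fun x => ?_⟩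
    rw [Fintype.sum_unique]
    have hx : x = fun i => i.elim0 := funext fun i => i.elim0
    simp [mon, hx]
  | succ K ih =>
    intro f
    choose c' hc' using fun a : ZMod p => ih (fun y => f (Fin.cons a y))
    refine ⟨fun e => ∑ a : ZMod p, Dco a ((e 0 : ℕ)) * c' a (fun i => e i.succ), fun x => ?_⟩
    have hA : f x = ∑ a : ZMod p, (if x 0 = a then (1:ZMod p) else 0) * f (Fin.cons a (Fin.tail x)) := by
      have e1 : ∑ a : ZMod p, (if x 0 = a then (1:ZMod p) else 0) * f (Fin.cons a (Fin.tail x))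
          = ∑ a : ZMod p, (if x 0 = a then f (Fin.cons a (Fin.tail x)) else 0) := by
        apply Finset.sum_congr rfl; intro a _; split <;> simp
      rw [e1, Finset.sum_ite_eq Finset.univ (x 0)]
      simp [Fin.cons_self_tail]
    -- T : the common triple sum
    have hLHS : f x = ∑ a : ZMod p, ∑ j : Fin p, ∑ e' : Fin K → Fin p,
        Dco a (j:ℕ) * c' a e' * (x 0 ^ (j:ℕ) * mon (fun i => ((e' i : ℕ))) (Fin.tail x)) := by
      rw [hA]
      apply Finset.sum_congr rfl
      intro a _
      rw [hdelta a (x 0), hc' a (Fin.tail x), Finset.sum_mul_sum]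
      apply Finset.sum_congr rfl; intro j _
      apply Finset.sum_congr rfl; intro e' _
      ring
    rw [hLHS]
    -- now the RHS
    have hRHS : ∑ e : (Fin (K+1) → Fin p), (∑ a : ZMod p, Dco a ((e 0 : ℕ)) * c' a (fun i => e i.succ))
          * mon (fun i => ((e i : ℕ))) x
        = ∑ a : ZMod p, ∑ j : Fin p, ∑ e' : Fin K → Fin p,
        Dco a (j:ℕ) * c' a e' * (x 0 ^ (j:ℕ) * mon (fun i => ((e' i : ℕ))) (Fin.tail x)) := by
      have e2 : ∀ e : Fin (K+1) → Fin p,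
          (∑ a : ZMod p, Dco a ((e 0 : ℕ)) * c' a (fun i => e i.succ)) * mon (fun i => ((e i : ℕ))) x
          = ∑ a : ZMod p, Dco a ((e 0 : ℕ)) * c' a (fun i => e i.succ)
              * (x 0 ^ ((e 0 : ℕ)) * mon (fun i => ((e i.succ : ℕ))) (Fin.tail x)) := by
        intro e
        rw [Finset.sum_mul]
        apply Finset.sum_congr rfl
        intro a _
        rw [mon_succ (fun i => ((e i : ℕ))) x]
      rw [Finset.sum_congr rfl (fun e _ => e2 e)]
      rw [Finset.sum_comm]
      apply Finset.sum_congr rfl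
      intro a _
      -- now : ∑ e : Fin (K+1) → Fin p, g (e 0) (e ∘ succ) = ∑ j ∑ e'
      rw [← (Fin.consEquiv (fun _ : Fin (K+1) => Fin p)).sum_comp
        (fun e => Dco a ((e 0 : ℕ)) * c' a (fun i => e i.succ)
          * (x 0 ^ ((e 0 : ℕ)) * mon (fun i => ((e i.succ : ℕ))) (Fin.tail x)))]
      rw [Fintype.sum_prod_type]
      apply Finset.sum_congr rfl
      intro j _
      apply Finset.sum_congr rfl
      intro e' _
      simp [Fin.consEquiv, Fin.cons_zero, Fin.cons_succ]
    rw [hRHS]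

end S17

namespace S17
variable {p : ℕ} [Fact p.Prime] {C : Set (Ops (ZMod p))}

lemma extract (hC : IsClone C) (hplus : plusOp (ZMod p) ∈ C)
    (h0 : ∀ h ∈ C, Preserves0 h) {K : ℕ}
    (s : Finset (Fin (K+1) → Fin p))
    (hZ : ∀ e ∈ s, ∀ e' ∈ s, (∀ i, e i = 0 ↔ e' i = 0) → e = e') :
    ∀ (c : (Fin (K+1) → Fin p) → ZMod p),
      (⟨K, fun x => ∑ e ∈ s, c e * mon (fun i => ((e i : ℕ))) x⟩ : Ops (ZMod p)) ∈ C →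
      ∀ e ∈ s, c e ≠ 0 →
        e ≠ (fun _ => 0) ∧ (⟨K, mon (fun i => ((e i : ℕ)))⟩ : Ops (ZMod p)) ∈ C := by
  classical
  haveI : NeZero p := ⟨(Fact.out : p.Prime).ne_zero⟩
  suffices H : ∀ (N : ℕ) (c : (Fin (K+1) → Fin p) → ZMod p),
      (s.filter fun e => c e ≠ 0).card = N →
      (⟨K, fun x => ∑ e ∈ s, c e * mon (fun i => ((e i : ℕ))) x⟩ : Ops (ZMod p)) ∈ C →
      ∀ e ∈ s, c e ≠ 0 →
        e ≠ (fun _ => 0) ∧ (⟨K, mon (fun i => ((e i : ℕ)))⟩ : Ops (ZMod p)) ∈ C by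
    intro c hmem; exact H _ c rfl hmem
  intro N
  induction N using Nat.strong_induction_on with
  | _ N ih =>
    intro c hcard hmem e0 he0 hce0
    have hne : (s.filter fun e => c e ≠ 0).Nonempty :=
      ⟨e0, Finset.mem_filter.mpr ⟨he0, hce0⟩⟩
    obtain ⟨es, hes, hmax⟩ := Finset.exists_max_image (s.filter fun e => c e ≠ 0)
      (fun e => (Finset.univ.filter fun i => e i = 0).card) hne
    have hes_s : es ∈ s := (Finset.mem_filter.mp hes).1
    have hces : c es ≠ 0 := (Finset.mem_filter.mp hes).2
    set msk : (Fin (K+1) → ZMod p) → (Fin (K+1) → ZMod p) :=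
      fun x i => if es i = 0 then 0 else x i with hmsk
    have hmem2 : (⟨K, fun x => ∑ e ∈ s, c e * mon (fun i => ((e i : ℕ))) (msk x)⟩ :
        Ops (ZMod p)) ∈ C := by
      refine memC_comp hC hmem (G := fun i x => if es i = 0 then 0 else x i) (fun i => ?_)
      show (⟨K, fun x : Fin (K+1) → ZMod p => if es i = 0 then 0 else x i⟩ : Ops (ZMod p)) ∈ C
      by_cases h : es i = 0
      · have heq : (fun x : Fin (K+1) → ZMod p => if es i = 0 then (0:ZMod p) else x i)
            = fun _ => 0 := by funext x; rw [if_pos h]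
        rw [heq]; exact memC_zero hC hplus
      · have heq : (fun x : Fin (K+1) → ZMod p => if es i = 0 then (0:ZMod p) else x i)
            = fun x => x i := by funext x; rw [if_neg h]
        rw [heq]; exact memC_proj hC i
    have hFstar : ∀ x, ∑ e ∈ s, c e * mon (fun i => ((e i : ℕ))) (msk x)
        = c es * mon (fun i => ((es i : ℕ))) x := by
      intro x
      rw [Finset.sum_eq_single es]
      · congr 1
        unfold mon
        apply Finset.prod_congr rfl
        intro i _
        by_cases h : es i = 0
        · have h' : ((es i : ℕ)) = 0 := by rw [h]; simp
          simp [h']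
        · simp [hmsk, h]
      · intro b hb hbe
        by_cases hcb : c b = 0
        · rw [hcb, zero_mul]
        · have hbf : b ∈ s.filter (fun e => c e ≠ 0) := Finset.mem_filter.mpr ⟨hb, hcb⟩
          by_cases hsub : ∀ i, es i = 0 → b i = 0
          · exfalso
            have hss : (Finset.univ.filter fun i => es i = 0)
                ⊆ (Finset.univ.filter fun i => b i = 0) := by
              intro i hi
              simp only [Finset.mem_filter] at *
              exact ⟨hi.1, hsub i hi.2⟩
            have hseq := Finset.eq_of_subset_of_card_le hss (hmax b hbf)
            apply hbe
            apply hZ b hb es hes_s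
            intro i
            constructor
            · intro h
              have hmem' : i ∈ Finset.univ.filter fun i => b i = 0 := by simp [h]
              rw [← hseq] at hmem'
              simpa using hmem'
            · intro h
              have hmem' : i ∈ Finset.univ.filter fun i => es i = 0 := by simp [h]
              rw [hseq] at hmem'
              simpa using hmem'
          · push_neg at hsub
            obtain ⟨i, hi1, hi2⟩ := hsub
            have hz : mon (fun i => ((b i : ℕ))) (msk x) = 0 := by
              apply Finset.prod_eq_zero (Finset.mem_univ i)
              have hm : msk x i = 0 := by simp [hmsk, hi1]
              rw [hm]
              apply zero_pow
              exact fun hc => hi2 (Fin.ext (by simpa using hc))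
            rw [hz, mul_zero]
      · intro hnot; exact absurd hes_s hnot
    have hmem3 : (⟨K, fun x => c es * mon (fun i => ((es i : ℕ))) x⟩ : Ops (ZMod p)) ∈ C := by
      have heq : (fun x => ∑ e ∈ s, c e * mon (fun i => ((e i : ℕ))) (msk x))
          = fun x => c es * mon (fun i => ((es i : ℕ))) x := funext hFstar
      rw [← heq]; exact hmem2
    have hes0 : es ≠ (fun _ => 0) := by
      intro h
      have hzero := h0 _ hmem3
      unfold Preserves0 at hzero
      simp only at hzero
      rw [show (fun i : Fin (K+1) => ((es i : ℕ))) = fun _ => 0 by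
        funext i; rw [h]; simp] at hzero
      simp [mon] at hzero
      exact hces hzero
    have hmon_es : (⟨K, mon (fun i => ((es i : ℕ)))⟩ : Ops (ZMod p)) ∈ C := by
      have hsm := memC_smul hC hplus (c es)⁻¹ hmem3
      have heq : (fun x => (c es)⁻¹ * (c es * mon (fun i => ((es i : ℕ))) x))
          = mon (fun i => ((es i : ℕ))) := by
        funext x; rw [← mul_assoc, inv_mul_cancel₀ hces, one_mul]
      rw [heq] at hsm; exact hsm
    by_cases hee : e0 = es
    · subst hee; exact ⟨hes0, hmon_es⟩
    · set c2 := Function.update c es 0 with hc2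
      have hrepr : ∀ x, ∑ e ∈ s, c2 e * mon (fun i => ((e i : ℕ))) x
          = (∑ e ∈ s, c e * mon (fun i => ((e i : ℕ))) x)
            + (-(c es)) * mon (fun i => ((es i : ℕ))) x := by
        intro x
        rw [← Finset.add_sum_erase s _ hes_s,
          ← Finset.add_sum_erase s (fun e => c e * mon (fun i => ((e i : ℕ))) x) hes_s]
        have hcc : ∀ e ∈ s.erase es, c2 e * mon (fun i => ((e i : ℕ))) x
            = c e * mon (fun i => ((e i : ℕ))) x := by
          intro e he
          rw [hc2, Function.update_of_ne (Finset.ne_of_mem_erase he)]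
        rw [Finset.sum_congr rfl hcc]
        rw [hc2, Function.update_self]
        ring
      have hmem4 : (⟨K, fun x => ∑ e ∈ s, c2 e * mon (fun i => ((e i : ℕ))) x⟩ :
          Ops (ZMod p)) ∈ C := by
        have hadd := memC_add hC hplus hmem (memC_smul hC hplus (-(c es)) hmon_es)
        have heq := funext hrepr
        rw [show (fun x => ∑ e ∈ s, c2 e * mon (fun i => ((e i : ℕ))) x)
          = fun x => (∑ e ∈ s, c e * mon (fun i => ((e i : ℕ))) x)
            + (-(c es)) * mon (fun i => ((es i : ℕ))) x from heq]
        exact hadd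
      have hcard2 : (s.filter fun e => c2 e ≠ 0).card < N := by
        have hset : (s.filter fun e => c2 e ≠ 0) = (s.filter fun e => c e ≠ 0).erase es := by
          ext b
          simp only [Finset.mem_filter, Finset.mem_erase, hc2]
          constructor
          · rintro ⟨hb, hnz⟩
            have hbne : b ≠ es := by
              intro h; subst h; simp [Function.update_self] at hnz
            rw [Function.update_of_ne hbne] at hnz
            exact ⟨hbne, hb, hnz⟩
          · rintro ⟨hbne, hb, hnz⟩
            rw [Function.update_of_ne hbne]
            exact ⟨hb, hnz⟩
        rw [hset, ← hcard]
        exact Finset.card_erase_lt_of_mem hes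
      refine ih _ hcard2 c2 rfl hmem4 e0 he0 ?_
      rw [hc2, Function.update_of_ne hee]
      exact hce0

end S17

namespace S17
variable {p : ℕ} [Fact p.Prime] {C : Set (Ops (ZMod p))}

lemma rep (hC : IsClone C) (hplus : plusOp (ZMod p) ∈ C)
    (h0 : ∀ h ∈ C, Preserves0 h) {K : ℕ} {F : (Fin (K+1) → ZMod p) → ZMod p}
    (hF : (⟨K, F⟩ : Ops (ZMod p)) ∈ C) :
    ∃ c : (Fin (K+1) → Fin p) → ZMod p,
      (∀ x, F x = ∑ e : Fin (K+1) → Fin p, c e * mon (fun i => ((e i : ℕ))) x) ∧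
      ∀ e, c e ≠ 0 →
        e ≠ (fun _ => 0) ∧ (⟨K, mon (fun i => ((e i : ℕ)))⟩ : Ops (ZMod p)) ∈ C := by
  classical
  haveI : NeZero p := ⟨(Fact.out : p.Prime).ne_zero⟩
  obtain ⟨c, hc⟩ := span (p := p) (K+1) F
  refine ⟨c, hc, ?_⟩
  intro e hce
  set w : Fin (K+1) → ℕ := fun i => if (e i : ℕ) = 0 then p - 1 else (e i : ℕ) with hwdef
  have hn1 : 1 ≤ p - 1 := by have := (Fact.out : p.Prime).two_le; omega
  have hw1 : ∀ i, 1 ≤ w i := by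
    intro i; rw [hwdef]; dsimp only; split
    · exact hn1
    · omega
  have hw2 : ∀ i, w i ≤ p - 1 := by
    intro i; rw [hwdef]; dsimp only; split
    · exact le_refl _
    · have := (e i).is_lt; omega
  set sw := Finset.univ.filter
    (fun e' : Fin (K+1) → Fin p =>
      ∀ i, ((e' i : ℕ) = w i ∨ ((e' i : ℕ) = 0 ∧ w i = p - 1))) with hswdef
  have hcwF : cw w F = fun x => ∑ e' ∈ sw, c e' * mon (fun i => ((e' i : ℕ))) x := by
    have hF' : F = fun x => ∑ e' : Fin (K+1) → Fin p, c e' * mon (fun i => ((e' i : ℕ))) x :=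
      funext hc
    rw [hF', cw_sum]
    funext x
    rw [hswdef, Finset.sum_filter]
    apply Finset.sum_congr rfl
    intro e' _
    rw [cw_mon w (fun i => ((e' i : ℕ))) (fun i => by show ((e' i : ℕ)) ≤ p - 1; have := (e' i).is_lt; omega) hw1 hw2]
    by_cases hm : ∀ i, ((e' i : ℕ) = w i ∨ ((e' i : ℕ) = 0 ∧ w i = p - 1))
    · rw [if_pos hm, if_pos hm]
    · rw [if_neg hm, if_neg hm]; simp
  have hmemcw : (⟨K, fun x => ∑ e' ∈ sw, c e' * mon (fun i => ((e' i : ℕ))) x⟩ :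
      Ops (ZMod p)) ∈ C := by
    rw [← hcwF]; exact cw_mem hC hplus w hF
  have hZ : ∀ e₁ ∈ sw, ∀ e₂ ∈ sw, (∀ i, e₁ i = 0 ↔ e₂ i = 0) → e₁ = e₂ := by
    intro e₁ h₁ e₂ h₂ hiff
    rw [hswdef, Finset.mem_filter] at h₁ h₂
    funext i
    by_cases hz : e₁ i = 0
    · rw [hz, ← ((hiff i).mp hz)]
    · have hz2 : e₂ i ≠ 0 := fun h => hz ((hiff i).mpr h)
      have v1 : (e₁ i : ℕ) = w i := by
        rcases h₁.2 i with h | ⟨h, _⟩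
        · exact h
        · exact absurd (Fin.ext (by simpa using h)) hz
      have v2 : (e₂ i : ℕ) = w i := by
        rcases h₂.2 i with h | ⟨h, _⟩
        · exact h
        · exact absurd (Fin.ext (by simpa using h)) hz2
      exact Fin.ext (v1.trans v2.symm)
  have hesw : e ∈ sw := by
    rw [hswdef, Finset.mem_filter]
    refine ⟨Finset.mem_univ e, fun i => ?_⟩
    by_cases h : (e i : ℕ) = 0
    · right; exact ⟨h, by rw [hwdef]; dsimp only; rw [if_pos h]⟩
    · left; rw [hwdef]; dsimp only; rw [if_neg h]
  exact extract hC hplus h0 sw hZ c hmemcw e hesw hce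

end S17

namespace S17
variable {p : ℕ} [Fact p.Prime] {C : Set (Ops (ZMod p))}

lemma memC_monSubst (hC : IsClone C) {J K : ℕ} {u : Fin (J+1) → ℕ}
    {B : Fin (J+1) → Fin (K+1) → ℕ}
    (hu : (⟨J, mon u⟩ : Ops (ZMod p)) ∈ C)
    (hB : ∀ i, (⟨K, mon (B i)⟩ : Ops (ZMod p)) ∈ C) :
    (⟨K, mon (fun i' => ∑ i, u i * B i i')⟩ : Ops (ZMod p)) ∈ C := by
  have h := memC_comp hC hu hB
  have heq : (fun x => mon u (fun i => mon (B i) x))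
      = mon (p := p) (fun i' => ∑ i, u i * B i i') := by
    funext x
    show ∏ i, (∏ i', x i' ^ B i i') ^ u i = ∏ i', x i' ^ (∑ i, u i * B i i')
    calc ∏ i, (∏ i', x i' ^ B i i') ^ u i
        = ∏ i, ∏ i', x i' ^ (B i i' * u i) := by
          apply Finset.prod_congr rfl
          intro i _
          rw [← Finset.prod_pow]
          apply Finset.prod_congr rfl
          intro i' _
          rw [← pow_mul]
      _ = ∏ i', ∏ i, x i' ^ (B i i' * u i) := Finset.prod_comm
      _ = ∏ i', x i' ^ (∑ i, B i i' * u i) := by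
          apply Finset.prod_congr rfl
          intro i' _
          rw [Finset.prod_pow_eq_pow_sum]
      _ = ∏ i', x i' ^ (∑ i, u i * B i i') := by
          apply Finset.prod_congr rfl
          intro i' _
          congr 1
          exact Finset.sum_congr rfl (fun i _ => mul_comm _ _)
  rw [← heq]
  exact h

def dpat {K : ℕ} (i0 : Fin K) : Fin K → ℕ := fun i' => if i0 = i' then 1 else 0

lemma mon_dpat {K : ℕ} (i0 : Fin K) : mon (p := p) (dpat i0) = fun x => x i0 := by
  funext x
  show ∏ i', x i' ^ (if i0 = i' then 1 else 0) = x i0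
  rw [Finset.prod_eq_single i0]
  · rw [if_pos rfl, pow_one]
  · intro b _ hb
    rw [if_neg (Ne.symm hb), pow_zero]
  · intro h; exact absurd (Finset.mem_univ i0) h

def TT (C : Set (Ops (ZMod p))) (j : ℕ) : Prop :=
  ∀ (K : ℕ) (e : Fin (K+1) → ℕ), (∑ i, e i) = j + 1 →
    (⟨K, mon e⟩ : Ops (ZMod p)) ∈ C

lemma sum_eq_one_dpat {K : ℕ} (e : Fin (K+1) → ℕ) (h : ∑ i, e i = 1) :
    ∃ i0, e = dpat i0 := by
  classical
  have hex : ∃ i0, e i0 ≠ 0 := by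
    by_contra hcon
    push_neg at hcon
    rw [Finset.sum_eq_zero (fun i _ => hcon i)] at h
    omega
  obtain ⟨i0, hi0⟩ := hex
  have h1 : e i0 ≤ 1 := h ▸ Finset.single_le_sum (fun i _ => Nat.zero_le (e i)) (Finset.mem_univ i0)
  have h2 : e i0 = 1 := by omega
  have h3 : ∑ i ∈ Finset.univ.erase i0, e i = 0 := by
    have := Finset.add_sum_erase Finset.univ e (Finset.mem_univ i0)
    omega
  refine ⟨i0, funext fun i' => ?_⟩
  unfold dpat
  by_cases hii : i0 = i'
  · rw [if_pos hii, ← hii, h2]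
  · rw [if_neg hii]
    exact (Finset.sum_eq_zero_iff).mp h3 i' (Finset.mem_erase.mpr ⟨fun hc => hii hc.symm, Finset.mem_univ i'⟩)

lemma TT_zero (hC : IsClone C) : TT C 0 := by
  intro K e he
  obtain ⟨i0, rfl⟩ := sum_eq_one_dpat e he
  rw [mon_dpat]
  exact memC_proj hC i0

lemma splitSum {ι : Type*} [Fintype ι] [DecidableEq ι] :
    ∀ (m : ℕ) (e : ι → ℕ), m ≤ ∑ i, e i →
      ∃ e₂ : ι → ℕ, (∀ i, e₂ i ≤ e i) ∧ ∑ i, e₂ i = m := by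
  intro m
  induction m with
  | zero => exact fun e _ => ⟨fun _ => 0, fun i => Nat.zero_le _, by simp⟩
  | succ m ih =>
    intro e hm
    obtain ⟨e₂, hle, hsum⟩ := ih e (by omega)
    have hex : ∃ i0, e₂ i0 < e i0 := by
      by_contra hcon
      push_neg at hcon
      have := Finset.sum_le_sum (fun i (_ : i ∈ Finset.univ) => hcon i)
      omega
    obtain ⟨i0, hi0⟩ := hex
    refine ⟨Function.update e₂ i0 (e₂ i0 + 1), fun i => ?_, ?_⟩
    · by_cases h : i = i0
      · subst h; rw [Function.update_self]; omega
      · rw [Function.update_of_ne h]; exact hle i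
    · rw [Finset.sum_update_of_mem (Finset.mem_univ i0)]
      have h1 : Finset.univ \ {i0} = Finset.univ.erase i0 := by
        rw [Finset.sdiff_singleton_eq_erase]
      rw [h1]
      have h2 := Finset.add_sum_erase Finset.univ e₂ (Finset.mem_univ i0)
      omega

lemma TT_add (hC : IsClone C) {j j' : ℕ} (h1 : TT C j) (h2 : TT C j') :
    TT C (j + j') := by
  classical
  intro K e he
  obtain ⟨e₂, hle, hs2⟩ := splitSum j e (by omega)
  set e₁ : Fin (K+1) → ℕ := fun i => e i - e₂ i with he1
  have hback : ∀ i, e₁ i + e₂ i = e i := by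
    intro i; rw [he1]; dsimp only; have := hle i; omega
  have hs1 : ∑ i, e₁ i = j' + 1 := by
    have hB : (∑ i, e₁ i) + ∑ i, e₂ i = ∑ i, e i := by
      rw [← Finset.sum_add_distrib]
      exact Finset.sum_congr rfl (fun i _ => hback i)
    omega
  have hu : (⟨K+1, mon (Fin.cons 1 e₂)⟩ : Ops (ZMod p)) ∈ C := by
    apply h1
    rw [Fin.sum_cons]
    omega
  have hB : ∀ i : Fin (K+2), (⟨K, mon ((Fin.cons e₁ (fun i => dpat i) : Fin (K+2) → Fin (K+1) → ℕ) i)⟩ : Ops (ZMod p)) ∈ C := by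
    intro i
    induction i using Fin.cases with
    | zero => rw [Fin.cons_zero]; exact h2 K e₁ hs1
    | succ i => rw [Fin.cons_succ, mon_dpat]; exact memC_proj hC i
  have h := memC_monSubst hC hu hB
  have heq : (fun i' => ∑ i : Fin (K+2),
      (Fin.cons 1 e₂ : Fin (K+2) → ℕ) i * (Fin.cons e₁ (fun i => dpat i) : Fin (K+2) → Fin (K+1) → ℕ) i i') = e := by
    funext i'
    rw [Fin.sum_univ_succ]
    simp only [Fin.cons_zero, Fin.cons_succ, one_mul]
    have hd : ∑ i : Fin (K+1), e₂ i * dpat i i' = e₂ i' := by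
      unfold dpat
      rw [Finset.sum_congr rfl (fun i (_ : i ∈ Finset.univ) => by
        rw [mul_ite, mul_one, mul_zero])]
      rw [Finset.sum_ite_eq' Finset.univ i' e₂]
      rw [if_pos (Finset.mem_univ i')]
    rw [hd]
    have := hback i'
    omega
  rw [heq] at h
  exact h

lemma pow_reduce (x : ZMod p) (a : ℕ) (ha : 1 ≤ a) : x^(a + (p-1)) = x^a := by
  by_cases hx : x = 0
  · subst hx
    rw [zero_pow (by omega : a + (p-1) ≠ 0), zero_pow (by omega : a ≠ 0)]
  · rw [pow_add, ZMod.pow_card_sub_one_eq_one hx, mul_one]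

lemma TT_down (hC : IsClone C) {j : ℕ} (h : TT C (j + (p-1))) : TT C j := by
  classical
  intro K e he
  have hex : ∃ i0, e i0 ≠ 0 := by
    by_contra hcon
    push_neg at hcon
    rw [Finset.sum_eq_zero (fun i _ => hcon i)] at he
    omega
  obtain ⟨i0, hi0⟩ := hex
  have hmem := h K (Function.update e i0 (e i0 + (p-1))) ?_
  · have heq : mon (p := p) (Function.update e i0 (e i0 + (p-1))) = mon e := by
      funext x
      unfold mon
      apply Finset.prod_congr rfl
      intro i _
      by_cases hii : i = i0
      · subst hii
        rw [Function.update_self]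
        exact pow_reduce (x i) (e i) (by omega)
      · rw [Function.update_of_ne hii]
    rw [heq] at hmem
    exact hmem
  · rw [Finset.sum_update_of_mem (Finset.mem_univ i0), Finset.sdiff_singleton_eq_erase]
    have h2 := Finset.add_sum_erase Finset.univ e (Finset.mem_univ i0)
    omega

lemma TT_nsmul (hC : IsClone C) {j : ℕ} (hj : TT C j) : ∀ m, TT C (m * j) := by
  intro m
  induction m with
  | zero => simpa using TT_zero hC
  | succ m ih =>
    have := TT_add hC ih hj
    have heq : m * j + j = (m+1) * j := by ring
    rwa [heq] at this

lemma TT_downMul (hC : IsClone C) : ∀ (m r : ℕ), TT C (r + (p-1) * m) → TT C r := by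
  intro m
  induction m with
  | zero => intro r h; simpa using h
  | succ m ih =>
    intro r h
    apply ih
    apply TT_down hC
    have heq : r + (p-1) * m + (p-1) = r + (p-1) * (m+1) := by ring
    rwa [heq]

end S17

set_option linter.unusedVariables false
namespace S17
variable {p : ℕ} [Fact p.Prime] {C : Set (Ops (ZMod p))}

lemma TT_of_ML (hC : IsClone C) {j : ℕ}
    (hML : (⟨j, mon (fun _ => 1)⟩ : Ops (ZMod p)) ∈ C) : TT C j := by
  classical
  intro K e he
  have hcard : Fintype.card (Σ i : Fin (K+1), Fin (e i)) = j + 1 := by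
    simp [Fintype.card_sigma, he]
  set ψ := Fintype.equivFinOfCardEq hcard with hψ
  have h := memC_monSubst hC hML (B := fun k => dpat ((ψ.symm k).1))
    (fun k => by rw [mon_dpat]; exact memC_proj hC _)
  have heq : (fun i' => ∑ k : Fin (j+1), 1 * dpat ((ψ.symm k).1) i') = e := by
    funext i'
    simp only [one_mul]
    unfold dpat
    rw [Equiv.sum_comp ψ.symm (fun σ : (Σ i : Fin (K+1), Fin (e i)) => if σ.1 = i' then 1 else 0)]
    rw [← Finset.univ_sigma_univ, Finset.sum_sigma]
    have hinner : ∀ i : Fin (K+1), (∑ _t : Fin (e i), if i = i' then 1 else 0)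
        = if i = i' then e i else 0 := by
      intro i
      by_cases hii : i = i'
      · rw [Finset.sum_congr rfl (fun t _ => if_pos hii), Finset.sum_const, Finset.card_univ,
          Fintype.card_fin, if_pos hii, smul_eq_mul, mul_one]
      · rw [Finset.sum_congr rfl (fun t _ => if_neg hii), Finset.sum_const, if_neg hii,
          smul_eq_mul, mul_zero]
    rw [Finset.sum_congr rfl (fun i _ => hinner i)]
    rw [Finset.sum_ite_eq' Finset.univ i' e, if_pos (Finset.mem_univ i')]
  rw [heq] at h
  exact h

lemma ML_of_mon_le_one (hC : IsClone C) {K : ℕ} (e : Fin (K+1) → ℕ)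
    (hle : ∀ i, e i ≤ 1) {j : ℕ} (he : ∑ i, e i = j + 1)
    (hmem : (⟨K, mon e⟩ : Ops (ZMod p)) ∈ C) :
    (⟨j, mon (fun _ : Fin (j+1) => 1)⟩ : Ops (ZMod p)) ∈ C := by
  classical
  have hcard : Fintype.card (Σ i : Fin (K+1), Fin (e i)) = j + 1 := by
    simp [Fintype.card_sigma, he]
  set ψ := Fintype.equivFinOfCardEq hcard with hψ
  set B : Fin (K+1) → Fin (j+1) → ℕ := fun i =>
    if e i = 0 then dpat (0 : Fin (j+1))
    else (fun k => if (ψ.symm k).1 = i then 1 else 0) with hB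
  have hBmem : ∀ i, (⟨j, mon (B i)⟩ : Ops (ZMod p)) ∈ C := by
    intro i
    rw [hB]
    dsimp only
    by_cases hei : e i = 0
    · rw [if_pos hei, mon_dpat]; exact memC_proj hC _
    · rw [if_neg hei]
      have hei1 : e i = 1 := by have := hle i; omega
      set k0 : Fin (j+1) := ψ ⟨i, ⟨0, by omega⟩⟩ with hk0
      have hfun : (fun k : Fin (j+1) => if (ψ.symm k).1 = i then 1 else 0) = dpat k0 := by
        funext k
        unfold dpat
        by_cases hk : k0 = k
        · rw [if_pos hk, ← hk, hk0, Equiv.symm_apply_apply, if_pos rfl]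
        · rw [if_neg hk]
          have : ¬ (ψ.symm k).1 = i := by
            intro hcon
            apply hk
            have hσ : ψ.symm k = ⟨i, ⟨0, by omega⟩⟩ := by
              apply Sigma.ext hcon
              have hv : ((ψ.symm k).2 : ℕ) = 0 := by
                have h1 := ((ψ.symm k).2).is_lt
                have h2 : e (ψ.symm k).fst = 1 := by rw [hcon, hei1]
                omega
              rw [Fin.heq_ext_iff (by rw [hcon])]
              simpa using hv
            rw [hk0, ← hσ, Equiv.apply_symm_apply]
          rw [if_neg this]
      rw [hfun, mon_dpat]
      exact memC_proj hC _
  have h := memC_monSubst hC hmem hBmem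
  have heq : (fun k => ∑ i, e i * B i k) = (fun _ : Fin (j+1) => 1) := by
    funext k
    set σ := ψ.symm k with hσ
    have hpos : 1 ≤ e σ.1 := by
      have := (σ.2).is_lt
      omega
    have hterm : ∀ i, e i * B i k = if σ.1 = i then 1 else 0 := by
      intro i
      rw [hB]
      dsimp only
      by_cases hei : e i = 0
      · rw [if_pos hei, hei, zero_mul]
        have : ¬ σ.1 = i := by
          intro hcon
          rw [hcon] at hpos
          omega
        rw [if_neg this]
      · rw [if_neg hei]
        have hei1 : e i = 1 := by have := hle i; omega
        rw [hei1, one_mul, ← hσ]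
    rw [Finset.sum_congr rfl (fun i _ => hterm i)]
    rw [Finset.sum_ite_eq Finset.univ σ.1 (fun _ => 1), if_pos (Finset.mem_univ _)]
  rw [heq] at h
  exact h

end S17

namespace S17
variable {p : ℕ} [Fact p.Prime] {C : Set (Ops (ZMod p))}

lemma split_step (hC : IsClone C) (hplus : plusOp (ZMod p) ∈ C) {K : ℕ}
    (e : Fin (K+1) → ℕ) (i0 : Fin (K+1))
    (hE : ∀ i, e i ≤ p - 1) (ha : 2 ≤ e i0)
    (hmem : (⟨K, mon e⟩ : Ops (ZMod p)) ∈ C) :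
    (⟨K+1, mon (Fin.cons 1 (Function.update e i0 (e i0 - 1)))⟩ : Ops (ZMod p)) ∈ C := by
  classical
  haveI : NeZero p := ⟨(Fact.out : p.Prime).ne_zero⟩
  have hn2 : 2 ≤ p - 1 := le_trans ha (hE i0)
  set a := e i0 with hadef
  set F : (Fin (K+2) → ZMod p) → ZMod p :=
    fun x => mon e (fun i => if i = i0 then x 0 + x i0.succ else x i.succ) with hFdef
  have hFmem : (⟨K+1, F⟩ : Ops (ZMod p)) ∈ C := by
    refine memC_comp hC hmem
      (G := fun i x => if i = i0 then x 0 + x i0.succ else x i.succ) (fun i => ?_)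
    show (⟨K+1, fun x : Fin (K+2) → ZMod p =>
      if i = i0 then x 0 + x i0.succ else x i.succ⟩ : Ops (ZMod p)) ∈ C
    by_cases h : i = i0
    · have heq : (fun x : Fin (K+2) → ZMod p => if i = i0 then x 0 + x i0.succ else x i.succ)
          = fun x => x 0 + x i0.succ := by funext x; rw [if_pos h]
      rw [heq]; exact memC_add hC hplus (memC_proj hC 0) (memC_proj hC i0.succ)
    · have heq : (fun x : Fin (K+2) → ZMod p => if i = i0 then x 0 + x i0.succ else x i.succ)
          = fun x => x i.succ := by funext x; rw [if_neg h]
      rw [heq]; exact memC_proj hC i.succ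
  set E : ℕ → (Fin (K+2) → ℕ) := fun jj => Fin.cons jj (Function.update e i0 (a - jj)) with hEdef
  have hexp : ∀ x, F x = ∑ jj ∈ Finset.range (a+1), ((a.choose jj : ZMod p)) * mon (E jj) x := by
    intro x
    rw [hFdef]
    show mon e (fun i => if i = i0 then x 0 + x i0.succ else x i.succ) = _
    unfold mon
    rw [← Finset.mul_prod_erase Finset.univ
      (fun i => (if i = i0 then x 0 + x i0.succ else x i.succ)^(e i)) (Finset.mem_univ i0)]
    rw [if_pos rfl]
    have hP : ∏ i ∈ Finset.univ.erase i0, (if i = i0 then x 0 + x i0.succ else x i.succ)^(e i)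
        = ∏ i ∈ Finset.univ.erase i0, (x i.succ)^(e i) :=
      Finset.prod_congr rfl (fun i hi => by rw [if_neg (Finset.ne_of_mem_erase hi)])
    rw [hP, add_pow, Finset.sum_mul]
    apply Finset.sum_congr rfl
    intro jj hjj
    have hmonE : (∏ i : Fin (K+2), x i ^ E jj i)
        = x 0 ^ jj * ((x i0.succ)^(a - jj) * ∏ i ∈ Finset.univ.erase i0, (x i.succ)^(e i)) := by
      rw [Fin.prod_univ_succ]
      rw [hEdef]
      simp only [Fin.cons_zero, Fin.cons_succ]
      congr 1
      rw [← Finset.mul_prod_erase Finset.univ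
        (fun i => (x i.succ)^(Function.update e i0 (a - jj) i)) (Finset.mem_univ i0)]
      rw [Function.update_self]
      congr 1
      exact Finset.prod_congr rfl (fun i hi => by
        rw [Function.update_of_ne (Finset.ne_of_mem_erase hi)])
    rw [hmonE]
    ring
  set w : Fin (K+2) → ℕ := fun i => if E 1 i = 0 then p - 1 else E 1 i with hwdef
  have hEb : ∀ jj, jj ≤ a → ∀ i, E jj i ≤ p - 1 := by
    intro jj hjj i
    rw [hEdef]
    induction i using Fin.cases with
    | zero => simp only [Fin.cons_zero]; have := hE i0; omega
    | succ i =>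
      simp only [Fin.cons_succ]
      by_cases h : i = i0
      · rw [h, Function.update_self]; have := hE i0; omega
      · rw [Function.update_of_ne h]; exact hE i
  have hw1 : ∀ i, 1 ≤ w i := by
    intro i; rw [hwdef]; dsimp only; split
    · omega
    · omega
  have hw2 : ∀ i, w i ≤ p - 1 := by
    intro i; rw [hwdef]; dsimp only; split
    · exact le_refl _
    · exact hEb 1 (by omega) i
  have hmatch1 : ∀ i, E 1 i = w i ∨ (E 1 i = 0 ∧ w i = p - 1) := by
    intro i
    by_cases h : E 1 i = 0
    · right; exact ⟨h, by rw [hwdef]; dsimp only; rw [if_pos h]⟩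
    · left; rw [hwdef]; dsimp only; rw [if_neg h]
  have hE10 : E 1 0 = 1 := by rw [hEdef]; simp
  have hmatchne : ∀ jj, jj ≠ 1 →
      ¬ (∀ i, E jj i = w i ∨ (E jj i = 0 ∧ w i = p - 1)) := by
    intro jj hne hcon
    have h0' := hcon 0
    have hw0 : w 0 = 1 := by rw [hwdef]; dsimp only; rw [hE10]; norm_num
    have hEjj0 : E jj 0 = jj := by rw [hEdef]; simp
    rw [hEjj0, hw0] at h0'
    rcases h0' with h | ⟨h1, h2⟩
    · exact hne h
    · omega
  have hcw : cw w F = fun x => ((a.choose 1 : ℕ) : ZMod p) * mon (E 1) x := by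
    have hFr : F = fun x => ∑ jj ∈ Finset.range (a+1), ((a.choose jj : ZMod p)) * mon (E jj) x :=
      funext hexp
    rw [hFr, cw_sum]
    funext x
    rw [Finset.sum_eq_single_of_mem 1 (Finset.mem_range.mpr (by omega))]
    · rw [cw_mon w (E 1) (hEb 1 (by omega)) hw1 hw2, if_pos (fun i => hmatch1 i)]
    · intro jj hjj hne
      rw [cw_mon w (E jj) (hEb jj (by
          have := Finset.mem_range.mp hjj; omega)) hw1 hw2,
        if_neg (hmatchne jj hne)]
      simp
  have hmemcw := cw_mem hC hplus w hFmem
  rw [hcw] at hmemcw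
  have hane : ((a.choose 1 : ℕ) : ZMod p) ≠ 0 := by
    rw [Nat.choose_one_right]
    have halt : a < p := by have := hE i0; omega
    intro hcon
    rw [ZMod.natCast_eq_zero_iff] at hcon
    exact absurd (Nat.le_of_dvd (by omega) hcon) (by omega)
  have hsm := memC_smul hC hplus ((a.choose 1 : ℕ) : ZMod p)⁻¹ hmemcw
  have heq : (fun x => ((a.choose 1 : ℕ) : ZMod p)⁻¹ * (((a.choose 1 : ℕ) : ZMod p) * mon (E 1) x))
      = mon (E 1) := by
    funext x; rw [← mul_assoc, inv_mul_cancel₀ hane, one_mul]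
  rw [heq] at hsm
  exact hsm

lemma TT_of_mon (hC : IsClone C) (hplus : plusOp (ZMod p) ∈ C) {K : ℕ}
    (e : Fin (K+1) → ℕ) (hE : ∀ i, e i ≤ p - 1) {j : ℕ} (he : ∑ i, e i = j + 1)
    (hmem : (⟨K, mon e⟩ : Ops (ZMod p)) ∈ C) : TT C j := by
  classical
  suffices H : ∀ (M K : ℕ) (e : Fin (K+1) → ℕ), (∑ i, (e i - 1)) = M →
      (∀ i, e i ≤ p - 1) → (∑ i, e i = j + 1) →
      (⟨K, mon e⟩ : Ops (ZMod p)) ∈ C → TT C j by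
    exact H _ K e rfl hE he hmem
  intro M
  induction M using Nat.strong_induction_on with
  | _ M ih =>
    intro K e hM hE he hmem
    have hp2 : 2 ≤ p := (Fact.out : p.Prime).two_le
    by_cases hex : ∃ i0, 2 ≤ e i0
    · obtain ⟨i0, hi0⟩ := hex
      have hss := split_step hC hplus e i0 hE hi0 hmem
      set e' : Fin (K+2) → ℕ := Fin.cons 1 (Function.update e i0 (e i0 - 1)) with he'def
      set S1 := ∑ i ∈ Finset.univ.erase i0, (e i - 1) with hS1
      set S2 := ∑ i ∈ Finset.univ.erase i0, e i with hS2
      have hkey1 : ∑ i : Fin (K+1), (Function.update e i0 (e i0 - 1) i - 1)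
          = (e i0 - 1 - 1) + ∑ i ∈ Finset.univ.erase i0, (e i - 1) := by
        rw [← Finset.add_sum_erase _ _ (Finset.mem_univ i0), Function.update_self]
        congr 1
        exact Finset.sum_congr rfl (fun i hi => by
          rw [Function.update_of_ne (Finset.ne_of_mem_erase hi)])
      have hkey1b : ∑ i : Fin (K+1), (Function.update e i0 (e i0 - 1) i)
          = (e i0 - 1) + ∑ i ∈ Finset.univ.erase i0, e i := by
        rw [← Finset.add_sum_erase _ _ (Finset.mem_univ i0), Function.update_self]
        congr 1
        exact Finset.sum_congr rfl (fun i hi => by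
          rw [Function.update_of_ne (Finset.ne_of_mem_erase hi)])
      have hkey2 : M = (e i0 - 1) + ∑ i ∈ Finset.univ.erase i0, (e i - 1) := by
        rw [← hM, ← Finset.add_sum_erase _ _ (Finset.mem_univ i0)]
      have hkey3 : j + 1 = e i0 + ∑ i ∈ Finset.univ.erase i0, e i := by
        rw [← he, ← Finset.add_sum_erase _ _ (Finset.mem_univ i0)]
      have hM' : ∑ i : Fin (K+2), (e' i - 1) = M - 1 := by
        rw [he'def, Fin.sum_univ_succ]
        simp only [Fin.cons_zero, Fin.cons_succ]
        rw [hkey1]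
        omega
      have hE' : ∀ i, e' i ≤ p - 1 := by
        intro i
        rw [he'def]
        induction i using Fin.cases with
        | zero => simp only [Fin.cons_zero]; omega
        | succ i =>
          simp only [Fin.cons_succ]
          by_cases h : i = i0
          · subst h; rw [Function.update_self]; have := hE i; omega
          · rw [Function.update_of_ne h]; exact hE i
      have he' : ∑ i : Fin (K+2), e' i = j + 1 := by
        rw [he'def, Fin.sum_univ_succ]
        simp only [Fin.cons_zero, Fin.cons_succ]
        rw [hkey1b]
        omega
      exact ih (M - 1) (by omega) (K+1) e' hM' hE' he' hss
    · push_neg at hex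
      exact TT_of_ML hC (ML_of_mon_le_one hC e (fun i => by have := hex i; omega) he hmem)

end S17

end S17aux

/-- Let `C` be a clone on `ZMod p` containing `+`, not contained in the
affine operations, all of whose operations preserve `{0}`. If `g` preserves `{0}` and
preserves every automorphism of `(ZMod p, +)` that is preserved by every operation of `C`,
then `g ∈ C`. -/

theorem statement17 (p : ℕ) (hp : p.Prime) (C : Set (Ops (ZMod p)))
    (hC : IsClone C) (hplus : plusOp (ZMod p) ∈ C) (haff : ¬ C ⊆ AffOps p)
    (h0 : ∀ h ∈ C, Preserves0 h) (g : Ops (ZMod p)) (hg0 : Preserves0 g)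
    (hgR : ∀ π : AddAut (ZMod p), (∀ h ∈ C, PreservesAut h π) → PreservesAut g π) :
    g ∈ C := by
  classical
  haveI hFact : Fact p.Prime := ⟨hp⟩
  haveI : NeZero p := ⟨hp.ne_zero⟩
  have hp2 : 2 ≤ p := hp.two_le
  obtain ⟨Kg, G⟩ := g
  -- helper: nonzero patterns have positive degree
  have hdegpos : ∀ {KK : ℕ} (e : Fin (KK+1) → Fin p), e ≠ (fun _ => 0) →
      1 ≤ ∑ i, ((e i : ℕ)) := by
    intro KK e hne
    by_contra hcon
    push_neg at hcon
    have hz : ∀ i, ((e i : ℕ)) = 0 := by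
      intro i
      have hle : ((e i : ℕ)) ≤ ∑ i', ((e i' : ℕ)) :=
        Finset.single_le_sum (f := fun i => ((e i : ℕ)))
          (fun i _ => Nat.zero_le _) (Finset.mem_univ i)
      omega
    exact hne (funext fun i => Fin.ext (by simpa using hz i))
  -- seed : a monomial of degree ≥ 2 in C
  obtain ⟨fop, hfC, hfA⟩ := Set.not_subset.mp haff
  obtain ⟨Kf, Ff⟩ := fop
  obtain ⟨cf, hcf, hcfC⟩ := S17.rep hC hplus h0 hfC
  set dFp : Fin (Kf+1) → (Fin (Kf+1) → Fin p) :=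
    fun i i' => if i = i' then (⟨1, hp.one_lt⟩ : Fin p) else 0 with hdFp
  have hbig : ∃ e : Fin (Kf+1) → Fin p, cf e ≠ 0 ∧ 2 ≤ ∑ i, ((e i : ℕ)) := by
    by_contra hcon
    push_neg at hcon
    apply hfA
    refine ⟨Kf, 0, fun i => cf (dFp i), ?_⟩
    have hFval : Ff = fun x => 0 + ∑ i, cf (dFp i) * x i := by
      funext x
      rw [hcf x, zero_add]
      have hsub : ∑ e ∈ Finset.image dFp Finset.univ, cf e * S17.mon (fun i => ((e i : ℕ))) x
          = ∑ e : Fin (Kf+1) → Fin p, cf e * S17.mon (fun i => ((e i : ℕ))) x := by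
        apply Finset.sum_subset (Finset.subset_univ _)
        intro e _ hnotim
        by_cases hce : cf e = 0
        · rw [hce, zero_mul]
        · exfalso
          obtain ⟨hne, _⟩ := hcfC e hce
          have h1 := hdegpos e hne
          have h2 := hcon e hce
          have hdeg : ∑ i, ((e i : ℕ)) = 1 := by omega
          obtain ⟨i0, hi0⟩ := S17.sum_eq_one_dpat (fun i => ((e i : ℕ))) hdeg
          apply hnotim
          rw [Finset.mem_image]
          refine ⟨i0, Finset.mem_univ i0, ?_⟩
          funext i'
          have := congrFun hi0 i'
          unfold S17.dpat at this
          rw [hdFp]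
          dsimp only
          by_cases hii : i0 = i'
          · rw [if_pos hii]
            apply Fin.ext
            rw [if_pos hii] at this
            exact this.symm
          · rw [if_neg hii]
            apply Fin.ext
            rw [if_neg hii] at this
            rw [this]
            exact Fin.val_zero p
      rw [← hsub]
      rw [Finset.sum_image (fun i _ i' _ hii => by
        have hcf2 := congrFun hii i
        rw [hdFp] at hcf2
        dsimp only at hcf2
        rw [if_pos rfl] at hcf2
        by_contra hne
        rw [if_neg (fun hc => hne hc.symm)] at hcf2
        have := congrArg Fin.val hcf2
        simpa using this)]
      apply Finset.sum_congr rfl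
      intro i _
      congr 1
      have hvals : (fun i' => ((dFp i i' : ℕ))) = S17.dpat i := by
        funext i'
        rw [hdFp]
        unfold S17.dpat
        dsimp only
        by_cases hii : i = i'
        · rw [if_pos hii, if_pos hii]
        · rw [if_neg hii, if_neg hii]; simp
      rw [hvals, S17.mon_dpat]
    rw [hFval]
  obtain ⟨eb, hebc, hebdeg⟩ := hbig
  obtain ⟨_, hebC⟩ := hcfC eb hebc
  -- TT seed
  have hTs0 : S17.TT C ((∑ i, ((eb i : ℕ))) - 1) :=
    S17.TT_of_mon hC hplus (fun i => ((eb i : ℕ)))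
      (fun i => by show ((eb i : ℕ)) ≤ p - 1; have := (eb i).is_lt; omega)
      (by show (∑ i, ((eb i : ℕ))) = ((∑ i, ((eb i : ℕ))) - 1) + 1; omega) hebC
  set s0 := (∑ i, ((eb i : ℕ))) - 1 with hs0
  have hs0pos : 1 ≤ s0 := by omega
  -- TT (p-1)
  have hTn : S17.TT C (p-1) := by
    have h1 := S17.TT_nsmul hC hTs0 (p-1)
    apply S17.TT_downMul hC (s0 - 1) (p-1)
    have heq : (p-1) + (p-1) * (s0 - 1) = (p-1) * s0 := by
      rw [add_comm, ← Nat.mul_succ]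
      congr 1
      omega
    rw [heq]
    exact h1
  -- d
  set dset : Set ℕ := {v | 0 < v ∧ S17.TT C v} with hdset
  have hdne : dset.Nonempty := ⟨p-1, by omega, hTn⟩
  set d := sInf dset with hd
  have hdmem := Nat.sInf_mem hdne
  have hd0 : 0 < d := hdmem.1
  have hTd : S17.TT C d := hdmem.2
  have hTT_dvd : ∀ j, S17.TT C j → d ∣ j := by
    intro j hj
    have hmul := S17.TT_nsmul hC hTd ((p-1-1) * (j / d))
    have hsum := S17.TT_add hC hj hmul
    have heqv : j + (p-1-1) * (j / d) * d = (j % d) + (p-1) * (d * (j / d)) := by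
      have h1 : d * (j / d) + j % d = j := Nat.div_add_mod j d
      have h2 : p - 1 = (p - 1 - 1) + 1 := by
        have : 1 ≤ p - 1 := by omega
        omega
      rw [h2]
      set q := j / d
      set m := p - 1 - 1
      calc j + m * q * d = d * q + j % d + m * q * d := by omega
        _ = j % d + (m + 1) * (d * q) := by ring
    rw [heqv] at hsum
    have hrT := S17.TT_downMul hC (d * (j / d)) (j % d) hsum
    by_cases hr : j % d = 0
    · exact Nat.dvd_of_mod_eq_zero hr
    · exfalso
      have hle : d ≤ j % d := Nat.sInf_le ⟨Nat.pos_of_ne_zero hr, hrT⟩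
      have := Nat.mod_lt j hd0
      omega
  have hdvd_TT : ∀ j, d ∣ j → S17.TT C j := by
    intro j hdj
    obtain ⟨k, rfl⟩ := hdj
    have := S17.TT_nsmul hC hTd k
    rwa [mul_comm] at this
  have hdn : d ∣ (p - 1) := hTT_dvd _ hTn
  have hdlt : d ≤ p - 1 := Nat.le_of_dvd (by omega) hdn
  -- units, generator
  obtain ⟨ζ, hζgen⟩ := IsCyclic.exists_generator (α := (ZMod p)ˣ)
  have hord : orderOf ζ = p - 1 := by
    rw [orderOf_eq_card_of_forall_mem_zpowers hζgen, Nat.card_eq_fintype_card, ZMod.card_units]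
  set a0 : (ZMod p)ˣ := ζ ^ ((p-1) / d) with ha0
  have horda0 : orderOf a0 = d := by
    rw [ha0, orderOf_pow, hord, Nat.gcd_eq_right (Nat.div_dvd_of_dvd hdn)]
    exact Nat.div_div_self hdn (by omega)
  have ha0d : a0 ^ d = 1 := by rw [← horda0]; exact pow_orderOf_eq_one a0
  have ha0dv : ((a0 : ZMod p))^d = 1 := by
    rw [← Units.val_pow_eq_pow_val, ha0d, Units.val_one]
  have hpow_a0 : ∀ t : ℕ, d ∣ t - 1 → 1 ≤ t → ((a0 : ZMod p))^t = (a0 : ZMod p) := by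
    intro t hdt h1t
    obtain ⟨k, hk⟩ := hdt
    have ht : t = 1 + d * k := by omega
    rw [ht, pow_add, pow_one, pow_mul, ha0dv, one_pow, mul_one]
  -- the AddAut
  set π : AddAut (ZMod p) :=
    { toFun := fun z => (a0 : ZMod p) * z
      invFun := fun z => ((a0⁻¹ : (ZMod p)ˣ) : ZMod p) * z
      left_inv := fun z => by
        show ((a0⁻¹ : (ZMod p)ˣ) : ZMod p) * ((a0 : ZMod p) * z) = z
        rw [← mul_assoc, ← Units.val_mul, inv_mul_cancel, Units.val_one, one_mul]
      right_inv := fun z => by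
        show (a0 : ZMod p) * (((a0⁻¹ : (ZMod p)ˣ) : ZMod p) * z) = z
        rw [← mul_assoc, ← Units.val_mul, mul_inv_cancel, Units.val_one, one_mul]
      map_add' := fun z1 z2 => mul_add _ _ _ } with hπ
  have hπap : ∀ z, π z = (a0 : ZMod p) * z := fun z => rfl
  -- premise
  have hprem : ∀ h ∈ C, PreservesAut h π := by
    intro h hh
    obtain ⟨Kh, H⟩ := h
    intro x
    show H (fun i => π (x i)) = π (H x)
    simp only [hπap]
    obtain ⟨ch, hch, hchC⟩ := S17.rep hC hplus h0 hh
    rw [hch (fun i => (a0 : ZMod p) * x i), hch x, Finset.mul_sum]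
    apply Finset.sum_congr rfl
    intro e _
    by_cases hce : ch e = 0
    · rw [hce, zero_mul, zero_mul, mul_zero]
    · obtain ⟨hne, hmonC⟩ := hchC e hce
      rw [S17.mon_scale_const]
      have hdeg1 := hdegpos e hne
      have hTdeg : S17.TT C ((∑ i, ((e i : ℕ))) - 1) :=
        S17.TT_of_mon hC hplus (fun i => ((e i : ℕ)))
          (fun i => by show ((e i : ℕ)) ≤ p - 1; have := (e i).is_lt; omega)
          (by show (∑ i, ((e i : ℕ))) = ((∑ i, ((e i : ℕ))) - 1) + 1; omega) hmonC
      rw [hpow_a0 _ (hTT_dvd _ hTdeg) hdeg1]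
      ring
  have hgaut := hgR π hprem
  have hgx : ∀ x : Fin (Kg+1) → ZMod p,
      G (fun i => (a0 : ZMod p) * x i) = (a0 : ZMod p) * G x := by
    intro x
    have := hgaut x
    simpa only [hπap] using this
  have hgxj : ∀ (jj : ℕ) (x : Fin (Kg+1) → ZMod p),
      G (fun i => ((a0 : ZMod p))^jj * x i) = ((a0 : ZMod p))^jj * G x := by
    intro jj
    induction jj with
    | zero => intro x; simp
    | succ m ih =>
      intro x
      have h1 : (fun i => ((a0 : ZMod p))^(m+1) * x i)
          = (fun i => ((a0 : ZMod p))^m * ((a0 : ZMod p) * x i)) := by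
        funext i; rw [pow_succ]; ring
      rw [h1, ih (fun i => (a0 : ZMod p) * x i), hgx x, pow_succ]
      ring
  -- representation of G
  obtain ⟨cg, hcg⟩ := S17.span (p := p) (Kg+1) G
  have hdna : ((d : ℕ) : ZMod p) ≠ 0 := by
    intro hcon
    rw [ZMod.natCast_eq_zero_iff] at hcon
    have := Nat.le_of_dvd hd0 hcon
    omega
  set σfun : (Fin (Kg+1) → Fin p) → ZMod p :=
    fun e => ∑ jj ∈ Finset.range d, (((a0 : ZMod p))^(d - 1 + ∑ i, ((e i : ℕ))))^jj with hσf
  set crep : (Fin (Kg+1) → Fin p) → ZMod p :=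
    fun e => ((d : ℕ) : ZMod p)⁻¹ * σfun e * cg e with hcrepdef
  have hgrep2 : ∀ x, G x = ∑ e : Fin (Kg+1) → Fin p,
      crep e * S17.mon (fun i => ((e i : ℕ))) x := by
    intro x
    have hA : ∑ jj ∈ Finset.range d,
        ((a0 : ZMod p))^(jj*(d-1)) * G (fun i => ((a0 : ZMod p))^jj * x i)
        = ((d : ℕ) : ZMod p) * G x := by
      have hterm : ∀ jj ∈ Finset.range d,
          ((a0 : ZMod p))^(jj*(d-1)) * G (fun i => ((a0 : ZMod p))^jj * x i) = G x := by
        intro jj _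
        rw [hgxj jj x, ← mul_assoc, ← pow_add]
        have heq : jj * (d-1) + jj = d * jj := by
          have hd1 : d - 1 + 1 = d := by omega
          calc jj * (d-1) + jj = jj * ((d-1) + 1) := by ring
            _ = d * jj := by rw [hd1]; ring
        rw [heq, pow_mul, ha0dv, one_pow, one_mul]
      rw [Finset.sum_congr rfl hterm, Finset.sum_const, Finset.card_range, nsmul_eq_mul]
    have hB : ∑ jj ∈ Finset.range d,
        ((a0 : ZMod p))^(jj*(d-1)) * G (fun i => ((a0 : ZMod p))^jj * x i)
        = ∑ e : Fin (Kg+1) → Fin p, σfun e * cg e * S17.mon (fun i => ((e i : ℕ))) x := by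
      have hterm : ∀ jj ∈ Finset.range d,
          ((a0 : ZMod p))^(jj*(d-1)) * G (fun i => ((a0 : ZMod p))^jj * x i)
          = ∑ e : Fin (Kg+1) → Fin p,
            (((a0 : ZMod p))^(d - 1 + ∑ i, ((e i : ℕ))))^jj * cg e
              * S17.mon (fun i => ((e i : ℕ))) x := by
        intro jj _
        rw [hcg (fun i => ((a0 : ZMod p))^jj * x i), Finset.mul_sum]
        apply Finset.sum_congr rfl
        intro e _
        rw [S17.mon_scale_const, ← pow_mul, ← pow_mul]
        have hexp : jj * (d - 1 + ∑ i, ((e i : ℕ)))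
            = jj * (d-1) + (jj * ∑ i, ((e i : ℕ))) := by ring
        rw [mul_comm (d - 1 + ∑ i, ((e i : ℕ))) jj, hexp, pow_add]
        ring
      rw [Finset.sum_congr rfl hterm, Finset.sum_comm]
      apply Finset.sum_congr rfl
      intro e _
      rw [hσf]
      dsimp only
      rw [Finset.sum_mul, Finset.sum_mul]
    have hAB : ∑ e : Fin (Kg+1) → Fin p, σfun e * cg e * S17.mon (fun i => ((e i : ℕ))) x
        = ((d : ℕ) : ZMod p) * G x := by rw [← hB, hA]
    calc G x = ((d : ℕ) : ZMod p)⁻¹ * (((d : ℕ) : ZMod p) * G x) := by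
          rw [← mul_assoc, inv_mul_cancel₀ hdna, one_mul]
      _ = ((d : ℕ) : ZMod p)⁻¹ * ∑ e : Fin (Kg+1) → Fin p,
            σfun e * cg e * S17.mon (fun i => ((e i : ℕ))) x := by rw [hAB]
      _ = ∑ e : Fin (Kg+1) → Fin p, crep e * S17.mon (fun i => ((e i : ℕ))) x := by
          rw [Finset.mul_sum]
          apply Finset.sum_congr rfl
          intro e _
          rw [hcrepdef]
          ring
  -- zero pattern coefficient vanishes
  have hcrep0 : crep (fun _ => (0 : Fin p)) = 0 := by
    have h00 := hgrep2 (fun _ => 0)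
    have hG0 : G (fun _ => 0) = 0 := hg0
    rw [hG0] at h00
    rw [Finset.sum_eq_single (fun _ => (0 : Fin p))] at h00
    · rw [S17.mon_zero_arg, if_pos (fun i => by simp), mul_one] at h00
      exact h00.symm
    · intro e _ hne
      rw [S17.mon_zero_arg, if_neg, mul_zero]
      intro hall
      exact hne (funext fun i => Fin.ext (by simpa using hall i))
    · intro hnm; exact absurd (Finset.mem_univ _) hnm
  -- final membership
  have hGrep : G = fun x => ∑ e : Fin (Kg+1) → Fin p,
      crep e * S17.mon (fun i => ((e i : ℕ))) x := funext hgrep2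
  show (⟨Kg, G⟩ : Ops (ZMod p)) ∈ C
  rw [hGrep]
  apply S17.memC_sum' hC hplus Finset.univ crep
  intro e _ hce
  by_cases he0 : e = (fun _ => (0:Fin p))
  · exact absurd (he0 ▸ hce) (fun hcc => hcc hcrep0)
  · have hσne : σfun e ≠ 0 := by
      intro hcon
      apply hce
      rw [hcrepdef]
      dsimp only
      rw [hcon]
      ring
    have hu1 : ((a0 : ZMod p))^(d - 1 + ∑ i, ((e i : ℕ))) = 1 := by
      by_contra hcon
      apply hσne
      rw [hσf]
      dsimp only
      rw [S17.geom_field _ d (by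
        rw [← pow_mul, mul_comm (d - 1 + ∑ i, ((e i : ℕ))) d, pow_mul, ha0dv, one_pow]),
        if_neg hcon]
    have hdvd : d ∣ (d - 1 + ∑ i, ((e i : ℕ))) := by
      have hdvd' : orderOf a0 ∣ (d - 1 + ∑ i, ((e i : ℕ))) := by
        apply orderOf_dvd_of_pow_eq_one
        apply Units.ext
        rw [Units.val_pow_eq_pow_val, hu1, Units.val_one]
      rwa [horda0] at hdvd'
    have hdeg1 := hdegpos e he0
    have hdvd2 : d ∣ (∑ i, ((e i : ℕ))) - 1 := by
      have h2 := Nat.dvd_sub hdvd (dvd_refl d)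
      have heq : d - 1 + (∑ i, ((e i : ℕ))) - d = (∑ i, ((e i : ℕ))) - 1 := by omega
      rwa [heq] at h2
    exact hdvd_TT _ hdvd2 Kg (fun i => ((e i : ℕ)))
      (by show (∑ i, ((e i : ℕ))) = ((∑ i, ((e i : ℕ))) - 1) + 1; omega)
end

section
/- Let p be a prime and let C, D be linearly closed clonoids on Z_p. Define φ(C) := { ((x_1,y_1),…,(x_n,y_n)) ↦ (l_1(x_1,…,x_n) + f(y_1,…,y_n), l_2(y_1,…,y_n)) : n ∈ ℕ, l_1, l_2 ∈ Lin(Z_p) n-ary, f ∈ C n-ary }. Then φ(C) is a clone on Z_p × Z_p containing the componentwise addition ⊕, and C ⊆ D if and only if φ(C) ⊆ φ(D). -/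
lemma lin_mem (p n : ℕ) (a : Fin (n + 1) → ZMod p) :
    (⟨n, fun x => ∑ i, a i * x i⟩ : Ops (ZMod p)) ∈ LinOps p := ⟨n, a, rfl⟩

lemma mem_of_eq {A : Type} {C : Set (Ops A)} {n : ℕ}
    {f g : (Fin (n + 1) → A) → A} (h : (⟨n, f⟩ : Ops A) ∈ C) (hfg : f = g) :
    (⟨n, g⟩ : Ops A) ∈ C := hfg ▸ h

lemma zero_mem {p : ℕ} {C : Set (Ops (ZMod p))} (hC : IsLCC p C) (n : ℕ) :
    (⟨n, fun _ => (0 : ZMod p)⟩ : Ops (ZMod p)) ∈ C := by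
  obtain ⟨⟨m, g⟩, hg⟩ := hC.1
  have h1 : (⟨m, fun _ => (0 : ZMod p)⟩ : Ops (ZMod p)) ∈ C := by
    have h0 : (⟨m, fun x => (fun y : Fin 1 → ZMod p => ∑ i, (0 : ZMod p) * y i)
        (fun _ => g x)⟩ : Ops (ZMod p)) ∈ C :=
      hC.2.1 ⟨0, m, _, fun _ => g, lin_mem p 0 (fun _ => 0), fun _ => hg, rfl⟩
    refine mem_of_eq h0 ?_
    funext x; simp
  exact hC.2.2 ⟨m, n, fun _ => 0, fun _ => fun x => ∑ i, (0 : ZMod p) * x i, h1,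
    fun _ => lin_mem p n (fun _ => 0), rfl⟩

lemma lincomb_mem {p : ℕ} {C : Set (Ops (ZMod p))} (hC : IsLCC p C) {n m : ℕ}
    (a : Fin (n + 1) → ZMod p) (f : Fin (n + 1) → (Fin (m + 1) → ZMod p) → ZMod p)
    (hf : ∀ i, (⟨m, f i⟩ : Ops (ZMod p)) ∈ C) :
    (⟨m, fun x => ∑ i, a i * f i x⟩ : Ops (ZMod p)) ∈ C :=
  hC.2.1 ⟨n, m, fun y => ∑ i, a i * y i, f, lin_mem p n a, hf, rfl⟩

lemma comp_lin_mem {p : ℕ} {C : Set (Ops (ZMod p))} (hC : IsLCC p C) {n m : ℕ}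
    (f : (Fin (n + 1) → ZMod p) → ZMod p) (hf : (⟨n, f⟩ : Ops (ZMod p)) ∈ C)
    (b : Fin (n + 1) → Fin (m + 1) → ZMod p) :
    (⟨m, fun x => f (fun i => ∑ j, b i j * x j)⟩ : Ops (ZMod p)) ∈ C :=
  hC.2.2 ⟨n, m, f, fun i x => ∑ j, b i j * x j, hf, fun i => lin_mem p m (b i), rfl⟩

lemma addo_mem {p : ℕ} {C : Set (Ops (ZMod p))} (hC : IsLCC p C) {m : ℕ}
    (f g : (Fin (m + 1) → ZMod p) → ZMod p)
    (hf : (⟨m, f⟩ : Ops (ZMod p)) ∈ C) (hg : (⟨m, g⟩ : Ops (ZMod p)) ∈ C) :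
    (⟨m, fun x => f x + g x⟩ : Ops (ZMod p)) ∈ C := by
  have h := lincomb_mem hC (n := 1) (fun _ => 1) ![f, g]
    (by intro i; fin_cases i <;> assumption)
  refine mem_of_eq h ?_
  funext x
  simp [Fin.sum_univ_two]

lemma phi_mem {p : ℕ} {C : Set (Ops (ZMod p))} {n : ℕ}
    (a b : Fin (n + 1) → ZMod p) (f : (Fin (n + 1) → ZMod p) → ZMod p)
    (hf : (⟨n, f⟩ : Ops (ZMod p)) ∈ C) :
    (⟨n, fun x : Fin (n + 1) → ZMod p × ZMod p =>
       ((∑ i, a i * (x i).1) + f (fun i => (x i).2), ∑ i, b i * (x i).2)⟩ :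
       Ops (ZMod p × ZMod p)) ∈ phiMap p C :=
  ⟨n, _, _, f, lin_mem p n a, lin_mem p n b, hf, rfl⟩

lemma phi_mem_elim {p : ℕ} {C : Set (Ops (ZMod p))} {n : ℕ}
    {F : (Fin (n + 1) → ZMod p × ZMod p) → ZMod p × ZMod p}
    (h : (⟨n, F⟩ : Ops (ZMod p × ZMod p)) ∈ phiMap p C) :
    ∃ (a b : Fin (n + 1) → ZMod p) (f : (Fin (n + 1) → ZMod p) → ZMod p),
      (⟨n, f⟩ : Ops (ZMod p)) ∈ C ∧
      F = fun x => ((∑ i, a i * (x i).1) + f (fun i => (x i).2), ∑ i, b i * (x i).2) := by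
  obtain ⟨m, l₁, l₂, f, hl₁, hl₂, hf, hF⟩ := h
  have hnm : n = m := congrArg Sigma.fst hF
  subst hnm
  have hF' : F = fun x => (l₁ (fun i => (x i).1) + f (fun i => (x i).2),
      l₂ (fun i => (x i).2)) := eq_of_heq (Sigma.mk.inj_iff.mp hF).2
  obtain ⟨m₁, a, ha⟩ := hl₁
  have h1 : n = m₁ := congrArg Sigma.fst ha
  subst h1
  have ha' : l₁ = fun x => ∑ i, a i * x i := eq_of_heq (Sigma.mk.inj_iff.mp ha).2
  obtain ⟨m₂, b, hb⟩ := hl₂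
  have h2 : n = m₂ := congrArg Sigma.fst hb
  subst h2
  have hb' : l₂ = fun x => ∑ i, b i * x i := eq_of_heq (Sigma.mk.inj_iff.mp hb).2
  subst ha' hb'
  exact ⟨a, b, f, hf, hF'⟩

lemma sum_swap_mul {p n m : ℕ} (a : Fin (n + 1) → ZMod p)
    (A : Fin (n + 1) → Fin (m + 1) → ZMod p) (u : Fin (m + 1) → ZMod p) :
    ∑ i, a i * ∑ j, A i j * u j = ∑ j, (∑ i, a i * A i j) * u j := by
  simp only [Finset.mul_sum, Finset.sum_mul, mul_assoc]
  exact Finset.sum_comm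

/-- For linearly closed clonoids `C, D` on `ZMod p`, the set `φ(C)` is a
clone on `ZMod p × ZMod p` containing the componentwise addition `⊕`, and `C ⊆ D` iff
`φ(C) ⊆ φ(D)`. -/
theorem statement19 (p : ℕ) (hp : p.Prime) (C D : Set (Ops (ZMod p)))
    (hC : IsLCC p C) (hD : IsLCC p D) :
    IsClone (phiMap p C) ∧ plusOp (ZMod p × ZMod p) ∈ phiMap p C ∧
    (C ⊆ D ↔ phiMap p C ⊆ phiMap p D) := by
  refine ⟨⟨?_, ?_⟩, ?_, ?_, ?_⟩
  · -- projections
    intro n j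
    have h := phi_mem (C := C) (fun i => if i = j then 1 else 0)
      (fun i => if i = j then 1 else 0) (fun _ => 0) (zero_mem hC n)
    refine mem_of_eq h ?_
    funext x
    simp [ite_mul, Finset.sum_ite_eq', Prod.ext_iff]
  · -- composition
    rintro h ⟨n, m, F, G, hF, hG, rfl⟩
    obtain ⟨a, b, f, hf, rfl⟩ := phi_mem_elim hF
    choose A B g hg hGeq using fun i => phi_mem_elim (hG i)
    have hf' : (⟨m, fun v : Fin (m + 1) → ZMod p =>
        (∑ i, a i * g i v) + f (fun i => ∑ j, B i j * v j)⟩ : Ops (ZMod p)) ∈ C :=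
      addo_mem hC _ _ (lincomb_mem hC a g hg) (comp_lin_mem hC f hf B)
    have h := phi_mem (C := C) (fun j => ∑ i, a i * A i j) (fun j => ∑ i, b i * B i j)
      _ hf'
    refine mem_of_eq h ?_
    funext x
    simp only [hGeq]
    refine Prod.ext ?_ ?_
    · show (∑ j, (∑ i, a i * A i j) * (x j).1) +
        ((∑ i, a i * g i (fun j => (x j).2)) + f (fun i => ∑ j, B i j * (x j).2)) = _
      rw [← sum_swap_mul]
      simp only [mul_add, Finset.sum_add_distrib]
      ring
    · show ∑ j, (∑ i, b i * B i j) * (x j).2 = ∑ i, b i * ∑ j, B i j * (x j).2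
      rw [sum_swap_mul]
  · -- plusOp
    have h := phi_mem (C := C) (n := 1) (fun _ => 1) (fun _ => 1) (fun _ => 0)
      (zero_mem hC 1)
    refine mem_of_eq h ?_
    funext x
    simp [Fin.sum_univ_two, Prod.ext_iff]
  · rintro hCD h ⟨n, l₁, l₂, f, h1, h2, hf, rfl⟩
    exact ⟨n, l₁, l₂, f, h1, h2, hCD hf, rfl⟩
  · intro hphi h hmem
    obtain ⟨n, f⟩ := h
    have hm := hphi (phi_mem (fun _ => 0) (fun _ => 0) f hmem)
    obtain ⟨a, b, f', hf', heq⟩ := phi_mem_elim hm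
    have hff : f = f' := by
      funext y
      have h1 := congrArg Prod.fst (congrFun heq (fun i => ((0 : ZMod p), y i)))
      simpa using h1
    rwa [hff]
end
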